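/- arXiv:2012.02231 — 2 statements merged into one kernel-verified Lean document; each statement's English description precedes it below -/
import Mathlib

section
/- Let N be a rooted binary phylogenetic network on X, let {a, b} be a cherry of N, and let N' be obtained from N by reducing b. Then for every subset A of X − {b}, the network exhibited by N on A is isomorphic to the network exhibited by N' on A. -/
open scoped Classical

/-- A directed graph with a finite vertex set and a multiset of arcs
(so that parallel arcs can be represented). -/
structure Digraph' (α : Type*) where
  V : Finset α
  E : Multiset (α × α)

namespace Digraph'

variable {α : Type*} [DecidableEq α]

/-- In-degree of a vertex. -/
noncomputable def inDeg (G : Digraph' α) (v : α) : ℕ :=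
  (G.E.filter (fun e => e.2 = v)).card

/-- Out-degree of a vertex. -/
noncomputable def outDeg (G : Digraph' α) (v : α) : ℕ :=
  (G.E.filter (fun e => e.1 = v)).card

/-- A (directed) path, given as its nonempty list of vertices. -/
def IsPath (G : Digraph' α) (p : List α) : Prop :=
  p ≠ [] ∧ (∀ v ∈ p, v ∈ G.V) ∧ p.Chain' (fun u v => (u, v) ∈ G.E)

/-- A directed path from `u` to `v`. -/
def PathFrom (G : Digraph' α) (u v : α) (p : List α) : Prop :=
  G.IsPath p ∧ p.head? = some u ∧ p.getLast? = some v

/-- There is a directed path from `u` to `v` (possibly trivial). -/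
def Reaches (G : Digraph' α) (u v : α) : Prop := ∃ p, G.PathFrom u v p

/-- Acyclicity: no arc whose head reaches its tail. -/
def Acyclic (G : Digraph' α) : Prop := ∀ e ∈ G.E, ¬ G.Reaches e.2 e.1

/-- `u` is a stable ancestor of `X'` (w.r.t. root `ρ`): every path from
`ρ` to each `x ∈ X'` traverses `u`. -/
def StableAncestor (G : Digraph' α) (ρ : α) (X' : Finset α) (u : α) : Prop :=
  ∀ x ∈ X', ∀ p, G.PathFrom ρ x p → u ∈ p

/-- `u` is a lowest stable ancestor of `X'`: it is a stable ancestor and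
no distinct stable ancestor of `X'` is a descendant of `u`. -/
def IsLowestSA (G : Digraph' α) (ρ : α) (X' : Finset α) (u : α) : Prop :=
  G.StableAncestor ρ X' u ∧
    ∀ v, G.StableAncestor ρ X' v → v ≠ u → ¬ G.Reaches u v

/-- Delete a vertex together with all incident arcs. -/
noncomputable def deleteVertex (G : Digraph' α) (w : α) : Digraph' α :=
  ⟨G.V.erase w, G.E.filter (fun e => e.1 ≠ w ∧ e.2 ≠ w)⟩

/-- `G'` is obtained from `G` by suppressing the in-degree-one
out-degree-one vertex `w` (replacing `(p,w)`, `(w,c)` by the arc `(p,c)`). -/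
def Suppress (G : Digraph' α) (w : α) (G' : Digraph' α) : Prop :=
  G.inDeg w = 1 ∧ G.outDeg w = 1 ∧
  ∃ p c, (p, w) ∈ G.E ∧ (w, c) ∈ G.E ∧
    G'.V = G.V.erase w ∧ G'.E = (G.deleteVertex w).E + {(p, c)}

/-- `G'` is obtained from `G` by deleting exactly one arc of a pair of
parallel arcs. -/
def DeleteParallel (G G' : Digraph' α) : Prop :=
  ∃ e : α × α, 2 ≤ G.E.count e ∧ G'.V = G.V ∧ G'.E = G.E.erase e

/-- One simplification step: suppress a degree-(1,1) vertex or delete a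
parallel arc. -/
def SimpStep (G G' : Digraph' α) : Prop :=
  (∃ w, G.Suppress w G') ∨ G.DeleteParallel G'

/-- `G'` is the full simplification of `G`. -/
def FullSimp (G G' : Digraph' α) : Prop :=
  Relation.ReflTransGen (SimpStep (α := α)) G G' ∧ ∀ G'', ¬ SimpStep G' G''

/-- The path graph of `G` on `A` (w.r.t. the vertex `r`): all vertices and
arcs lying on a directed path from `r` to a leaf in `A`. -/
noncomputable def pathGraph (G : Digraph' α) (r : α) (A : Finset α) : Digraph' α :=
  ⟨G.V.filter (fun v => ∃ x ∈ A, ∃ p, G.PathFrom r x p ∧ v ∈ p),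
   G.E.filter (fun e => ∃ x ∈ A, ∃ p, G.PathFrom r x p ∧ e ∈ p.zip p.tail)⟩

/-- Isomorphism of digraphs fixing every element of `A`. -/
def IsoOn (G1 G2 : Digraph' α) (A : Finset α) : Prop :=
  ∃ φ : α → α, Set.BijOn φ ↑G1.V ↑G2.V ∧ (∀ x ∈ A, φ x = x) ∧
    G2.E = G1.E.map (fun e => (φ e.1, φ e.2))

end Digraph'

/-- A rooted binary phylogenetic network on the leaf set `X`. -/
structure PhyloNet (α : Type*) where
  G : Digraph' α
  root : α
  X : Finset α
  root_mem : root ∈ G.V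
  wf : ∀ e ∈ G.E, e.1 ∈ G.V ∧ e.2 ∈ G.V
  noParallel : ∀ e : α × α, G.E.count e ≤ 1
  acyclic : G.Acyclic
  reach : ∀ v ∈ G.V, G.Reaches root v
  binary :
    (G.V = {root} ∧ G.E = 0 ∧ X = {root}) ∨
    (G.inDeg root = 0 ∧ G.outDeg root = 2 ∧
     (∀ x ∈ X, x ∈ G.V ∧ G.inDeg x = 1 ∧ G.outDeg x = 0) ∧
     (∀ v ∈ G.V, G.outDeg v = 0 → v ∈ X) ∧
     (∀ v ∈ G.V, v ≠ root → v ∉ X →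
       (G.inDeg v = 1 ∧ G.outDeg v = 2) ∨ (G.inDeg v = 2 ∧ G.outDeg v = 1)))

namespace PhyloNet

variable {α : Type*} [DecidableEq α]

/-- `N` is recoverable: the root is the only stable ancestor of `X`. -/
def Recoverable (N : PhyloNet α) : Prop :=
  ∀ v, N.G.StableAncestor N.root N.X v → v = N.root

/-- `{a, b}` is a cherry: two distinct leaves with a common parent. -/
def Cherry (N : PhyloNet α) (a b : α) : Prop :=
  a ∈ N.X ∧ b ∈ N.X ∧ a ≠ b ∧ ∃ p, (p, a) ∈ N.G.E ∧ (p, b) ∈ N.G.E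

/-- `(a, b)` is a reticulated cherry: leaves `a, b` whose parents `p_a, p_b`
satisfy that `(p_a, p_b)` is an arc and `p_b` is a reticulation. -/
def RetCherry (N : PhyloNet α) (a b : α) : Prop :=
  a ∈ N.X ∧ b ∈ N.X ∧ a ≠ b ∧
  ∃ pa pb, (pa, a) ∈ N.G.E ∧ (pb, b) ∈ N.G.E ∧ (pa, pb) ∈ N.G.E ∧
    N.G.inDeg pb = 2

/-- `N'` is obtained from `N` by reducing the leaf `b` of the cherry `{a, b}`:
delete `b` and its incident arc and suppress the resulting degree-two
vertex (or, if the common parent is the root, replace `N` by the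
single-vertex network on `a`). -/
def ReduceCherry (N : PhyloNet α) (a b : α) (N' : PhyloNet α) : Prop :=
  N.Cherry a b ∧ N'.X = N.X.erase b ∧
  ∃ p, (p, a) ∈ N.G.E ∧ (p, b) ∈ N.G.E ∧
    ((p = N.root ∧ N'.G.V = {a} ∧ N'.G.E = 0 ∧ N'.root = a) ∨
     (p ≠ N.root ∧ N'.root = N.root ∧ (N.G.deleteVertex b).Suppress p N'.G))

/-- `N'` is obtained from `N` by cutting the reticulated cherry `(a, b)`:
delete the reticulation arc `(p_a, p_b)` and suppress the two resulting
degree-two vertices. -/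
def CutRetCherry (N : PhyloNet α) (a b : α) (N' : PhyloNet α) : Prop :=
  a ∈ N.X ∧ b ∈ N.X ∧ a ≠ b ∧ N'.X = N.X ∧ N'.root = N.root ∧
  ∃ pa pb, (pa, a) ∈ N.G.E ∧ (pb, b) ∈ N.G.E ∧ (pa, pb) ∈ N.G.E ∧
    N.G.inDeg pb = 2 ∧
    ∃ G1 : Digraph' α, G1.V = N.G.V ∧ G1.E = N.G.E.erase (pa, pb) ∧
      ∃ G2 : Digraph' α, G1.Suppress pa G2 ∧ G2.Suppress pb N'.G

/-- One cherry-picking step: reduce a leaf of a cherry or cut a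
reticulated cherry. -/
def PickStep (N N' : PhyloNet α) : Prop :=
  (∃ a b, N.ReduceCherry a b N') ∨ (∃ a b, N.CutRetCherry a b N')

/-- `N` is an orchard network: some sequence of cherry-picking operations
reduces it to a single vertex. -/
def IsOrchard (N : PhyloNet α) : Prop :=
  ∃ M : PhyloNet α, Relation.ReflTransGen (PickStep (α := α)) N M ∧ M.G.V.card = 1

/-- `H` is the network exhibited by `N` on `A`: the full simplification of
the path graph of `N` on `A`, rooted at the lowest stable ancestor of `A`. -/
def Exhibits (N : PhyloNet α) (A : Finset α) (H : Digraph' α) : Prop :=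
  ∃ r, N.G.IsLowestSA N.root A r ∧ Digraph'.FullSimp (N.G.pathGraph r A) H

end PhyloNet

set_option linter.unusedSectionVars false
set_option linter.unusedVariables false
namespace Digraph'

variable {α : Type*} [DecidableEq α]

theorem ext' {G1 G2 : Digraph' α} (hV : G1.V = G2.V) (hE : G1.E = G2.E) : G1 = G2 := by
  cases G1; cases G2; simp_all

/-- helper: membership in `p.zip p.tail` for appended lists. -/
theorem mem_zip_append (q s : List α) (e : α × α) :
    e ∈ (q ++ s).zip (q ++ s).tail ↔
      e ∈ q.zip q.tail ∨ e ∈ s.zip s.tail ∨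
        (q.getLast? = some e.1 ∧ s.head? = some e.2) := by
  induction q with
  | nil => simp
  | cons x q ih =>
    cases q with
    | nil =>
      cases s with
      | nil => simp
      | cons y ys =>
        obtain ⟨e1, e2⟩ := e
        simp only [List.nil_append, List.singleton_append, List.tail_cons, List.zip_cons_cons,
          List.mem_cons, List.zip_nil_right, List.not_mem_nil, List.getLast?_singleton,
          List.head?_cons, Option.some.injEq, Prod.mk.injEq, false_or]
        tauto
    | cons z q' =>
      obtain ⟨e1, e2⟩ := e
      simp only [List.cons_append, List.tail_cons, List.zip_cons_cons, List.mem_cons,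
        List.getLast?_cons_cons] at ih ⊢
      rw [ih]
      tauto

theorem mem_of_zip_left {p : List α} {e : α × α} (h : e ∈ p.zip p.tail) :
    e.1 ∈ p ∧ e.2 ∈ p := by
  induction p with
  | nil => simp at h
  | cons x q ih =>
    cases q with
    | nil => simp at h
    | cons y ys =>
      rw [List.tail_cons, List.zip_cons_cons] at h
      rcases List.mem_cons.1 h with h | h
      · subst h; simp
      · have := ih (by simpa using h)
        exact ⟨List.mem_cons_of_mem _ this.1, List.mem_cons_of_mem _ this.2⟩

theorem chain'_iff_zip {R : α → α → Prop} {p : List α} :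
    p.Chain' R ↔ ∀ e ∈ p.zip p.tail, R e.1 e.2 := by
  induction p with
  | nil => simp [List.Chain']
  | cons x q ih =>
    cases q with
    | nil => simp [List.Chain']
    | cons y ys =>
      simp only [List.Chain'] at ih ⊢
      rw [List.isChain_cons_cons, List.tail_cons, List.zip_cons_cons]
      rw [ih]
      constructor
      · rintro ⟨h1, h2⟩ e he
        rcases List.mem_cons.1 he with he | he
        · subst he; exact h1
        · exact h2 e he
      · intro h
        exact ⟨h (x, y) List.mem_cons_self, fun e he => h e (List.mem_cons_of_mem _ he)⟩

theorem mem_zip_concat_self (q : List α) (x : α) (hq : q.getLast? = some x) (y : α) :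
    (x, y) ∈ (q ++ [y]).zip (q ++ [y]).tail := by
  rw [mem_zip_append]
  exact Or.inr (Or.inr ⟨hq, rfl⟩)

theorem mem_of_getLast?' {l : List α} {a : α} (h : l.getLast? = some a) : a ∈ l := by
  obtain ⟨h1, h2⟩ := List.mem_getLast?_eq_getLast (by rw [h]; rfl)
  subst h2; exact List.getLast_mem _

variable {G : Digraph' α}

theorem edge_of_mem_zip (hp : G.IsPath p) {e : α × α} (he : e ∈ p.zip p.tail) : e ∈ G.E :=
  chain'_iff_zip.1 hp.2.2 e he

theorem reach_refl (hwf : ∀ e ∈ G.E, e.1 ∈ G.V ∧ e.2 ∈ G.V) {v : α} (hv : v ∈ G.V) :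
    G.Reaches v v :=
  ⟨[v], ⟨by simp, by simpa using hv, by simp [List.Chain']⟩, by simp, by simp⟩

theorem reach_cons (hwf : ∀ e ∈ G.E, e.1 ∈ G.V ∧ e.2 ∈ G.V) {u v w : α}
    (he : (u, v) ∈ G.E) (h : G.Reaches v w) : G.Reaches u w := by
  obtain ⟨p, ⟨hne, hmem, hch⟩, hh, hl⟩ := h
  refine ⟨u :: p, ⟨by simp, ?_, ?_⟩, by simp, ?_⟩
  · intro x hx
    rcases List.mem_cons.1 hx with hx | hx
    · subst hx; exact (hwf _ he).1
    · exact hmem x hx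
  · simp only [List.Chain']; rw [List.isChain_cons]
    exact ⟨fun y hy => by rw [hh] at hy; cases hy; exact he, hch⟩
  · show (([u] : List α) ++ p).getLast? = _
    rw [List.getLast?_append_of_ne_nil _ hne]; exact hl

theorem reach_of_head (hwf : ∀ e ∈ G.E, e.1 ∈ G.V ∧ e.2 ∈ G.V) {p : List α} {u x : α}
    (hp : G.IsPath p) (hu : u ∈ p) (hx : p.head? = some x) : G.Reaches x u := by
  induction p generalizing x with
  | nil => simp at hu
  | cons y q ih =>
    obtain rfl : x = y := by simpa using hx.symm
    rcases List.mem_cons.1 hu with rfl | hu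
    · exact reach_refl hwf (hp.2.1 u (by simp))
    · have hq : q ≠ [] := List.ne_nil_of_mem hu
      obtain ⟨z, q', rfl⟩ := List.exists_cons_of_ne_nil hq
      have hqpath : G.IsPath (z :: q') :=
        ⟨by simp, fun v hv => hp.2.1 v (List.mem_cons_of_mem _ hv), hp.2.2.tail⟩
      have hzy : (x, z) ∈ G.E := (List.isChain_cons_cons.1 hp.2.2).1
      exact reach_cons hwf hzy (ih hqpath hu rfl)

theorem path_suffix {p : List α} {t u : α} (hp : G.IsPath p) (hl : p.getLast? = some t)
    (hu : u ∈ p) : ∃ q, q <:+ p ∧ G.PathFrom u t q := by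
  induction p with
  | nil => simp at hu
  | cons x q ih =>
    rcases List.mem_cons.1 hu with rfl | hu
    · exact ⟨u :: q, List.suffix_refl _, ⟨hp, by simp, hl⟩⟩
    · have hq : q ≠ [] := List.ne_nil_of_mem hu
      have hqpath : G.IsPath q :=
        ⟨hq, fun v hv => hp.2.1 v (List.mem_cons_of_mem _ hv), hp.2.2.tail⟩
      have hlq : q.getLast? = some t := by
        rw [show x :: q = [x] ++ q from rfl, List.getLast?_append_of_ne_nil _ hq] at hl
        exact hl
      obtain ⟨q', hq', hpath⟩ := ih hqpath hlq hu
      exact ⟨q', hq'.trans (List.suffix_cons x q), hpath⟩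

theorem reaches_of_mem_path {p : List α} {t u : α} (hp : G.IsPath p)
    (hl : p.getLast? = some t) (hu : u ∈ p) : G.Reaches u t := by
  obtain ⟨q, _, hq⟩ := path_suffix hp hl hu
  exact ⟨q, hq⟩

theorem nodup_of_path (hwf : ∀ e ∈ G.E, e.1 ∈ G.V ∧ e.2 ∈ G.V) (hac : G.Acyclic)
    {p : List α} (hp : G.IsPath p) : p.Nodup := by
  induction p with
  | nil => simp
  | cons x q ih =>
    by_cases hq : q = []
    · subst hq; simp
    · have hqpath : G.IsPath q :=
        ⟨hq, fun v hv => hp.2.1 v (List.mem_cons_of_mem _ hv), hp.2.2.tail⟩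
      refine List.nodup_cons.2 ⟨?_, ih hqpath⟩
      intro hx
      obtain ⟨z, q', rfl⟩ := List.exists_cons_of_ne_nil hq
      have hzy : (x, z) ∈ G.E := (List.isChain_cons_cons.1 hp.2.2).1
      exact hac (x, z) hzy (reach_of_head hwf hqpath hx rfl)

theorem not_edge_of_outDeg_zero {v y : α} (h : G.outDeg v = 0) : (v, y) ∉ G.E := by
  intro hmem
  have h1 : (v, y) ∈ G.E.filter (fun e => e.1 = v) := Multiset.mem_filter.2 ⟨hmem, rfl⟩
  have h2 : 0 < Multiset.card (G.E.filter (fun e => e.1 = v)) :=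
    Multiset.card_pos_iff_exists_mem.2 ⟨_, h1⟩
  simp only [outDeg] at h
  omega

theorem leaf_last {p : List α} {v : α} (hp : G.IsPath p) (hv : v ∈ p)
    (hd : G.outDeg v = 0) : p.getLast? = some v := by
  induction p with
  | nil => simp at hv
  | cons x q ih =>
    rcases List.mem_cons.1 hv with rfl | hv
    · cases q with
      | nil => simp
      | cons z q' => exact absurd (List.isChain_cons_cons.1 hp.2.2).1 (not_edge_of_outDeg_zero hd)
    · have hq : q ≠ [] := List.ne_nil_of_mem hv
      have hqpath : G.IsPath q :=
        ⟨hq, fun u hu => hp.2.1 u (List.mem_cons_of_mem _ hu), hp.2.2.tail⟩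
      rw [show x :: q = [x] ++ q from rfl, List.getLast?_append_of_ne_nil _ hq]
      exact ih hqpath hv

theorem reaches_comparable (hwf : ∀ e ∈ G.E, e.1 ∈ G.V ∧ e.2 ∈ G.V) {p : List α} {u v : α}
    (hp : G.IsPath p) (hu : u ∈ p) (hv : v ∈ p) : G.Reaches u v ∨ G.Reaches v u := by
  induction p with
  | nil => simp at hu
  | cons x q ih =>
    rcases List.mem_cons.1 hu with rfl | hu
    · exact Or.inl (reach_of_head hwf hp hv rfl)
    · rcases List.mem_cons.1 hv with rfl | hv
      · exact Or.inr (reach_of_head hwf hp hu rfl)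
      · have hq : q ≠ [] := List.ne_nil_of_mem hu
        exact ih ⟨hq, fun w hw => hp.2.1 w (List.mem_cons_of_mem _ hw), hp.2.2.tail⟩ hu hv

/-- helper for multiset filters. -/
theorem filter_eq_singleton {s : Multiset (α × α)} {P : α × α → Prop} [DecidablePred P]
    {e0 : α × α} (h0 : e0 ∈ s) (hP : P e0) (hc : s.count e0 = 1)
    (h1 : ∀ e ∈ s, P e → e = e0) : s.filter P = {e0} := by
  ext x
  rw [Multiset.count_filter]
  by_cases hx : x = e0
  · subst hx; rw [if_pos hP, hc]; simp
  · rw [Multiset.count_singleton, if_neg hx]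
    by_cases hPx : P x
    · rw [if_pos hPx]
      by_contra hne
      have : x ∈ s := Multiset.count_pos.1 (Nat.pos_of_ne_zero hne)
      exact hx (h1 x this hPx)
    · rw [if_neg hPx]

theorem card_two_three_distinct {s : Multiset (α × α)} (h : Multiset.card s = 2)
    {x y z : α × α} (hx : x ∈ s) (hy : y ∈ s) (hz : z ∈ s)
    (hxy : x ≠ y) (hxz : x ≠ z) (hyz : y ≠ z) : False := by
  obtain ⟨u, v, rfl⟩ := Multiset.card_eq_two.1 h
  simp only [Multiset.insert_eq_cons, Multiset.mem_cons, Multiset.mem_singleton] at hx hy hz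
  rcases hx with rfl | rfl <;> rcases hy with rfl | rfl <;> rcases hz with rfl | rfl <;>
    simp_all

theorem eq_of_mem_card_one {s : Multiset (α × α)} (h : Multiset.card s = 1)
    {x y : α × α} (hx : x ∈ s) (hy : y ∈ s) : x = y := by
  obtain ⟨u, rfl⟩ := Multiset.card_eq_one.1 h
  simp only [Multiset.mem_singleton] at hx hy; rw [hx, hy]

end Digraph'
namespace Digraph'

variable {α : Type*} [DecidableEq α]

/-- A strict ranking of the vertices along arcs: invariant for simplification. -/
def Rank (G : Digraph' α) : Prop := ∃ f : α → ℕ, ∀ e ∈ G.E, f e.2 < f e.1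

theorem rank_of (G : Digraph' α) (hwf : ∀ e ∈ G.E, e.1 ∈ G.V ∧ e.2 ∈ G.V)
    (hac : G.Acyclic) : G.Rank := by
  refine ⟨fun v => (G.V.filter (fun u => G.Reaches v u)).card, ?_⟩
  intro e he
  have hsub : G.V.filter (fun u => G.Reaches e.2 u) ⊆ G.V.filter (fun u => G.Reaches e.1 u) := by
    intro u hu
    obtain ⟨hu1, hu2⟩ := Finset.mem_filter.1 hu
    exact Finset.mem_filter.2 ⟨hu1, reach_cons hwf (show (e.1, e.2) ∈ G.E from he) hu2⟩
  refine Finset.card_lt_card ((Finset.ssubset_iff_of_subset hsub).2 ⟨e.1, ?_, ?_⟩)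
  · exact Finset.mem_filter.2 ⟨(hwf e he).1, reach_refl hwf (hwf e he).1⟩
  · intro hmem
    exact hac e he (Finset.mem_filter.1 hmem).2

theorem suppress_data {G G' : Digraph' α} {w : α} (h : G.Suppress w G') :
    ∃ p c, (p, w) ∈ G.E ∧ (w, c) ∈ G.E ∧
      G.E.filter (fun e => e.2 = w) = {(p, w)} ∧
      G.E.filter (fun e => e.1 = w) = {(w, c)} ∧
      G'.V = G.V.erase w ∧
      G'.E = G.E.filter (fun e => e.1 ≠ w ∧ e.2 ≠ w) + {(p, c)} := by
  obtain ⟨hin, hout, p, c, hp, hc, hV, hE⟩ := h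
  have h1 : G.E.filter (fun e => e.2 = w) = {(p, w)} := by
    obtain ⟨x, hx⟩ := Multiset.card_eq_one.1 hin
    have hm : (p, w) ∈ G.E.filter (fun e => e.2 = w) := Multiset.mem_filter.2 ⟨hp, rfl⟩
    rw [hx, Multiset.mem_singleton] at hm
    rw [hx, hm]
  have h2 : G.E.filter (fun e => e.1 = w) = {(w, c)} := by
    obtain ⟨x, hx⟩ := Multiset.card_eq_one.1 hout
    have hm : (w, c) ∈ G.E.filter (fun e => e.1 = w) := Multiset.mem_filter.2 ⟨hc, rfl⟩
    rw [hx, Multiset.mem_singleton] at hm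
    rw [hx, hm]
  exact ⟨p, c, hp, hc, h1, h2, hV, by simpa [deleteVertex] using hE⟩

theorem suppress_of_filters {H : Digraph' α} {w p c : α}
    (h1 : H.E.filter (fun e => e.2 = w) = {(p, w)})
    (h2 : H.E.filter (fun e => e.1 = w) = {(w, c)}) :
    H.Suppress w ⟨H.V.erase w, (H.deleteVertex w).E + {(p, c)}⟩ := by
  have hm1 : (p, w) ∈ H.E := by
    have : (p, w) ∈ H.E.filter (fun e => e.2 = w) := by
      rw [h1]; exact Multiset.mem_singleton_self _
    exact (Multiset.mem_filter.1 this).1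
  have hm2 : (w, c) ∈ H.E := by
    have : (w, c) ∈ H.E.filter (fun e => e.1 = w) := by
      rw [h2]; exact Multiset.mem_singleton_self _
    exact (Multiset.mem_filter.1 this).1
  refine ⟨?_, ?_, p, c, hm1, hm2, rfl, rfl⟩
  · simp only [inDeg, h1]; rfl
  · simp only [outDeg, h2]; rfl

theorem filter_and_eq_singleton {s : Multiset (α × α)} {P Q : α × α → Prop}
    [DecidablePred P] [DecidablePred Q] {e0 : α × α} (h : s.filter P = {e0}) (hQ : Q e0) :
    s.filter (fun e => P e ∧ Q e) = {e0} := by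
  have hmem : e0 ∈ s.filter P := by rw [h]; exact Multiset.mem_singleton_self _
  have hP0 : P e0 := (Multiset.mem_filter.1 hmem).2
  have hs0 : s.count e0 = 1 := by
    have h' := congrArg (Multiset.count e0) h
    rwa [Multiset.count_filter, if_pos hP0, Multiset.count_singleton_self] at h'
  ext x
  rw [Multiset.count_filter, Multiset.count_singleton]
  by_cases hx : x = e0
  · subst hx; rw [if_pos ⟨hP0, hQ⟩, hs0, if_pos rfl]
  · rw [if_neg hx]
    by_cases hPQ : P x ∧ Q x
    · rw [if_pos hPQ]
      have h' := congrArg (Multiset.count x) h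
      rwa [Multiset.count_filter, if_pos hPQ.1, Multiset.count_singleton, if_neg hx] at h'
    · rw [if_neg hPQ]

theorem filter_and_eq_zero {s : Multiset (α × α)} {P Q : α × α → Prop}
    [DecidablePred P] [DecidablePred Q] {e0 : α × α} (h : s.filter P = {e0}) (hQ : ¬ Q e0) :
    s.filter (fun e => P e ∧ Q e) = 0 := by
  rw [Multiset.filter_eq_nil]
  rintro e he ⟨hP, hQ'⟩
  have : e ∈ s.filter P := Multiset.mem_filter.2 ⟨he, hP⟩
  rw [h, Multiset.mem_singleton] at this
  subst this; exact hQ hQ'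

theorem erase_filter_of_not {s : Multiset (α × α)} {P : α × α → Prop} [DecidablePred P] {e : α × α}
    (hP : ¬ P e) : (s.erase e).filter P = s.filter P := by
  ext x
  rw [Multiset.count_filter, Multiset.count_filter]
  by_cases hx : P x
  · rw [if_pos hx, if_pos hx, Multiset.count_erase_of_ne (fun h => hP (by rw [← h]; exact hx))]
  · rw [if_neg hx, if_neg hx]

theorem filter_erase_comm {s : Multiset (α × α)} {P : α × α → Prop} [DecidablePred P] {e : α × α}
    (hP : P e) : (s.filter P).erase e = (s.erase e).filter P := by
  ext x
  by_cases hx : x = e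
  · subst hx
    rw [Multiset.count_erase_self, Multiset.count_filter, Multiset.count_filter,
      if_pos hP, if_pos hP, Multiset.count_erase_self]
  · rw [Multiset.count_erase_of_ne hx, Multiset.count_filter, Multiset.count_filter,
      Multiset.count_erase_of_ne hx]

theorem filter_notinc_comm (s : Multiset (α × α)) (w1 w2 : α) :
    (s.filter (fun e => e.1 ≠ w1 ∧ e.2 ≠ w1)).filter (fun e => e.1 ≠ w2 ∧ e.2 ≠ w2)
      = (s.filter (fun e => e.1 ≠ w2 ∧ e.2 ≠ w2)).filter (fun e => e.1 ≠ w1 ∧ e.2 ≠ w1) := by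
  rw [Multiset.filter_filter, Multiset.filter_filter]
  exact Multiset.filter_congr (fun x _ => by tauto)

theorem suppress_inj {G G1 G2 : Digraph' α} {w : α}
    (h1 : G.Suppress w G1) (h2 : G.Suppress w G2) : G1 = G2 := by
  obtain ⟨p1, c1, hp1, hc1, hin1, hout1, hV1, hE1⟩ := suppress_data h1
  obtain ⟨p2, c2, hp2, hc2, hin2, hout2, hV2, hE2⟩ := suppress_data h2
  obtain rfl : p1 = p2 := by
    have := hin1.symm.trans hin2
    rw [Multiset.singleton_inj, Prod.mk.injEq] at this
    exact this.1
  obtain rfl : c1 = c2 := by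
    have := hout1.symm.trans hout2
    rw [Multiset.singleton_inj, Prod.mk.injEq] at this
    exact this.2
  exact ext' (hV1.trans hV2.symm) (hE1.trans hE2.symm)

theorem diamond_chain {G G1 G2 : Digraph' α} {w1 w2 : α}
    (hR : G.Rank) (h1 : G.Suppress w1 G1) (h2 : G.Suppress w2 G2) (hne : w1 ≠ w2)
    (hchain : (w1, w2) ∈ G.E) :
    ∃ D, G1.Suppress w2 D ∧ G2.Suppress w1 D := by
  obtain ⟨p1, c1, hp1, hc1, hin1, hout1, hV1, hE1⟩ := suppress_data h1
  obtain ⟨p2, c2, hp2, hc2, hin2, hout2, hV2, hE2⟩ := suppress_data h2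
  obtain ⟨f, hf⟩ := hR
  obtain rfl : w2 = c1 := by
    have hm : (w1, w2) ∈ G.E.filter (fun e => e.1 = w1) := Multiset.mem_filter.2 ⟨hchain, rfl⟩
    rw [hout1, Multiset.mem_singleton, Prod.mk.injEq] at hm
    exact hm.2
  obtain rfl : w1 = p2 := by
    have hm : (w1, w2) ∈ G.E.filter (fun e => e.2 = w2) := Multiset.mem_filter.2 ⟨hchain, rfl⟩
    rw [hin2, Multiset.mem_singleton, Prod.mk.injEq] at hm
    exact hm.1
  have edge_lt : ∀ {u v : α}, (u, v) ∈ G.E → f v < f u := fun h => hf _ h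
  have hfc : f w2 < f w1 := edge_lt hchain
  have hp1w1 : p1 ≠ w1 := by intro h; have a := edge_lt hp1; rw [h] at a; omega
  have hp1w2 : p1 ≠ w2 := by intro h; have a := edge_lt hp1; rw [h] at a; omega
  have hc2w2 : c2 ≠ w2 := by intro h; have a := edge_lt hc2; rw [h] at a; omega
  have hc2w1 : c2 ≠ w1 := by intro h; have a := edge_lt hc2; rw [h] at a; omega
  have k1 : G1.E.filter (fun e => e.2 = w2) = {(p1, w2)} := by
    rw [hE1, Multiset.filter_add, Multiset.filter_filter,
      filter_and_eq_zero hin2 (by simp), Multiset.filter_singleton, if_pos rfl]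
    simp
  have k2 : G1.E.filter (fun e => e.1 = w2) = {(w2, c2)} := by
    rw [hE1, Multiset.filter_add, Multiset.filter_filter,
      filter_and_eq_singleton hout2 ⟨hne.symm, hc2w1⟩, Multiset.filter_singleton,
      if_neg (by simpa using hp1w2)]
    simp
  refine ⟨_, suppress_of_filters k1 k2, ?_⟩
  have k1' : G2.E.filter (fun e => e.2 = w1) = {(p1, w1)} := by
    rw [hE2, Multiset.filter_add, Multiset.filter_filter,
      filter_and_eq_singleton hin1 ⟨hp1w2, hne⟩, Multiset.filter_singleton,
      if_neg (by simpa using hc2w1)]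
    simp
  have k2' : G2.E.filter (fun e => e.1 = w1) = {(w1, c2)} := by
    rw [hE2, Multiset.filter_add, Multiset.filter_filter,
      filter_and_eq_zero hout1 (by simp), Multiset.filter_singleton, if_pos rfl]
    simp
  refine ⟨?_, ?_, p1, c2, ?_, ?_, ?_, ?_⟩
  · simp only [inDeg, k1']; rfl
  · simp only [outDeg, k2']; rfl
  · rw [hE2]
    exact Multiset.mem_add.2 (Or.inl (Multiset.mem_filter.2 ⟨hp1, hp1w2, hne⟩))
  · rw [hE2]
    exact Multiset.mem_add.2 (Or.inr (Multiset.mem_singleton_self _))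
  · show G1.V.erase w2 = G2.V.erase w1
    rw [hV1, hV2, Finset.erase_right_comm]
  · show (G1.deleteVertex w2).E + {(p1, c2)} = (G2.deleteVertex w1).E + {(p1, c2)}
    simp only [deleteVertex]
    rw [hE1, hE2, Multiset.filter_add, Multiset.filter_add,
      Multiset.filter_singleton, Multiset.filter_singleton,
      if_neg (by simp), if_neg (by simp), filter_notinc_comm]

theorem diamond_generic {G G1 G2 : Digraph' α} {w1 w2 : α}
    (hR : G.Rank) (h1 : G.Suppress w1 G1) (h2 : G.Suppress w2 G2) (hne : w1 ≠ w2)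
    (h12 : (w1, w2) ∉ G.E) (h21 : (w2, w1) ∉ G.E) :
    ∃ D, G1.Suppress w2 D ∧ G2.Suppress w1 D := by
  obtain ⟨p1, c1, hp1, hc1, hin1, hout1, hV1, hE1⟩ := suppress_data h1
  obtain ⟨p2, c2, hp2, hc2, hin2, hout2, hV2, hE2⟩ := suppress_data h2
  obtain ⟨f, hf⟩ := hR
  have hp1w2 : p1 ≠ w2 := by intro h; subst h; exact h21 hp1
  have hc1w2 : c1 ≠ w2 := by intro h; subst h; exact h12 hc1
  have hp2w1 : p2 ≠ w1 := by intro h; subst h; exact h12 hp2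
  have hc2w1 : c2 ≠ w1 := by intro h; subst h; exact h21 hc2
  have edge_lt : ∀ {u v : α}, (u, v) ∈ G.E → f v < f u := fun h => hf _ h
  have hp1w1 : p1 ≠ w1 := by intro h; have a := edge_lt hp1; rw [h] at a; omega
  have hc1w1 : c1 ≠ w1 := by intro h; have a := edge_lt hc1; rw [h] at a; omega
  have hp2w2 : p2 ≠ w2 := by intro h; have a := edge_lt hp2; rw [h] at a; omega
  have hc2w2 : c2 ≠ w2 := by intro h; have a := edge_lt hc2; rw [h] at a; omega
  have k1 : G1.E.filter (fun e => e.2 = w2) = {(p2, w2)} := by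
    rw [hE1, Multiset.filter_add, Multiset.filter_filter,
      filter_and_eq_singleton hin2 ⟨hp2w1, hne.symm⟩, Multiset.filter_singleton,
      if_neg (by simpa using hc1w2)]
    simp
  have k2 : G1.E.filter (fun e => e.1 = w2) = {(w2, c2)} := by
    rw [hE1, Multiset.filter_add, Multiset.filter_filter,
      filter_and_eq_singleton hout2 ⟨hne.symm, hc2w1⟩, Multiset.filter_singleton,
      if_neg (by simpa using hp1w2)]
    simp
  refine ⟨_, suppress_of_filters k1 k2, ?_⟩
  have k1' : G2.E.filter (fun e => e.2 = w1) = {(p1, w1)} := by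
    rw [hE2, Multiset.filter_add, Multiset.filter_filter,
      filter_and_eq_singleton hin1 ⟨hp1w2, hne⟩, Multiset.filter_singleton,
      if_neg (by simpa using hc2w1)]
    simp
  have k2' : G2.E.filter (fun e => e.1 = w1) = {(w1, c1)} := by
    rw [hE2, Multiset.filter_add, Multiset.filter_filter,
      filter_and_eq_singleton hout1 ⟨hne, hc1w2⟩, Multiset.filter_singleton,
      if_neg (by simpa using hp2w1)]
    simp
  refine ⟨?_, ?_, p1, c1, ?_, ?_, ?_, ?_⟩
  · simp only [inDeg, k1']; rfl
  · simp only [outDeg, k2']; rfl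
  · rw [hE2]
    exact Multiset.mem_add.2 (Or.inl (Multiset.mem_filter.2 ⟨hp1, hp1w2, hne⟩))
  · rw [hE2]
    exact Multiset.mem_add.2 (Or.inl (Multiset.mem_filter.2 ⟨hc1, hne, hc1w2⟩))
  · show G1.V.erase w2 = G2.V.erase w1
    rw [hV1, hV2, Finset.erase_right_comm]
  · show (G1.deleteVertex w2).E + {(p2, c2)} = (G2.deleteVertex w1).E + {(p1, c1)}
    simp only [deleteVertex]
    rw [hE1, hE2, Multiset.filter_add, Multiset.filter_add,
      Multiset.filter_singleton, Multiset.filter_singleton,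
      if_pos (show p1 ≠ w2 ∧ c1 ≠ w2 from ⟨hp1w2, hc1w2⟩),
      if_pos (show p2 ≠ w1 ∧ c2 ≠ w1 from ⟨hp2w1, hc2w1⟩), filter_notinc_comm]
    exact add_right_comm _ _ _

theorem diamond_sd {G G1 G2 : Digraph' α} {w : α}
    (h1 : G.Suppress w G1) (h2 : G.DeleteParallel G2) :
    ∃ D, G1.DeleteParallel D ∧ G2.Suppress w D := by
  obtain ⟨p, c, hp, hc, hin, hout, hV1, hE1⟩ := suppress_data h1
  obtain ⟨e, hcount, hV2, hE2⟩ := h2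
  have hmem : e ∈ G.E := by
    rw [← Multiset.count_pos]; omega
  have he2 : e.2 ≠ w := by
    intro h
    have hm : e ∈ G.E.filter (fun x => x.2 = w) := Multiset.mem_filter.2 ⟨hmem, h⟩
    rw [hin, Multiset.mem_singleton] at hm
    have h1' := congrArg (Multiset.count (p, w)) hin
    rw [Multiset.count_filter, if_pos rfl, Multiset.count_singleton_self] at h1'
    rw [hm] at hcount; omega
  have he1 : e.1 ≠ w := by
    intro h
    have hm : e ∈ G.E.filter (fun x => x.1 = w) := Multiset.mem_filter.2 ⟨hmem, h⟩
    rw [hout, Multiset.mem_singleton] at hm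
    have h1' := congrArg (Multiset.count (w, c)) hout
    rw [Multiset.count_filter, if_pos rfl, Multiset.count_singleton_self] at h1'
    rw [hm] at hcount; omega
  refine ⟨⟨G1.V, G1.E.erase e⟩, ⟨e, ?_, rfl, rfl⟩, ?_⟩
  · rw [hE1, Multiset.count_add, Multiset.count_filter, if_pos ⟨he1, he2⟩]; omega
  · have k1 : G2.E.filter (fun x => x.2 = w) = {(p, w)} := by
      rw [hE2, erase_filter_of_not (by simpa using he2), hin]
    have k2 : G2.E.filter (fun x => x.1 = w) = {(w, c)} := by
      rw [hE2, erase_filter_of_not (by simpa using he1), hout]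
    refine ⟨?_, ?_, p, c, ?_, ?_, ?_, ?_⟩
    · simp only [inDeg, k1]; rfl
    · simp only [outDeg, k2]; rfl
    · rw [hE2]
      exact (Multiset.mem_erase_of_ne (fun h => he2 (by rw [← h]))).2 hp
    · rw [hE2]
      exact (Multiset.mem_erase_of_ne (fun h => he1 (by rw [← h]))).2 hc
    · show G1.V = G2.V.erase w
      rw [hV1, hV2]
    · show G1.E.erase e = (G2.deleteVertex w).E + {(p, c)}
      simp only [deleteVertex]
      rw [hE1, hE2, Multiset.erase_add_left_pos _
        (Multiset.mem_filter.2 ⟨hmem, he1, he2⟩), filter_erase_comm ⟨he1, he2⟩]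

theorem diamond {G G1 G2 : Digraph' α} (hR : G.Rank)
    (h1 : SimpStep G G1) (h2 : SimpStep G G2) :
    G1 = G2 ∨ ∃ D, SimpStep G1 D ∧ SimpStep G2 D := by
  rcases h1 with ⟨w1, hs1⟩ | hd1 <;> rcases h2 with ⟨w2, hs2⟩ | hd2
  · by_cases hw : w1 = w2
    · subst hw; exact Or.inl (suppress_inj hs1 hs2)
    · right
      by_cases hc1 : (w1, w2) ∈ G.E
      · obtain ⟨D, ha, hb⟩ := diamond_chain hR hs1 hs2 hw hc1
        exact ⟨D, Or.inl ⟨w2, ha⟩, Or.inl ⟨w1, hb⟩⟩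
      · by_cases hc2 : (w2, w1) ∈ G.E
        · obtain ⟨D, ha, hb⟩ := diamond_chain hR hs2 hs1 (Ne.symm hw) hc2
          exact ⟨D, Or.inl ⟨w2, hb⟩, Or.inl ⟨w1, ha⟩⟩
        · obtain ⟨D, ha, hb⟩ := diamond_generic hR hs1 hs2 hw hc1 hc2
          exact ⟨D, Or.inl ⟨w2, ha⟩, Or.inl ⟨w1, hb⟩⟩
  · right
    obtain ⟨D, ha, hb⟩ := diamond_sd hs1 hd2
    exact ⟨D, Or.inr ha, Or.inl ⟨w1, hb⟩⟩
  · right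
    obtain ⟨D, ha, hb⟩ := diamond_sd hs2 hd1
    exact ⟨D, Or.inl ⟨w2, hb⟩, Or.inr ha⟩
  · obtain ⟨e1, hc1, hV1, hE1⟩ := hd1
    obtain ⟨e2, hc2, hV2, hE2⟩ := hd2
    by_cases he : e1 = e2
    · subst he
      exact Or.inl (ext' (hV1.trans hV2.symm) (hE1.trans hE2.symm))
    · right
      refine ⟨⟨G.V, (G.E.erase e1).erase e2⟩, Or.inr ⟨e2, ?_, ?_, ?_⟩, Or.inr ⟨e1, ?_, ?_, ?_⟩⟩
      · rw [hE1, Multiset.count_erase_of_ne (Ne.symm he)]; exact hc2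
      · rw [hV1]
      · rw [hE1]
      · rw [hE2, Multiset.count_erase_of_ne he]; exact hc1
      · rw [hV2]
      · rw [hE2, Multiset.erase_comm]

theorem rank_step {G G' : Digraph' α} (h : SimpStep G G') (hR : G.Rank) : G'.Rank := by
  obtain ⟨f, hf⟩ := hR
  refine ⟨f, ?_⟩
  rcases h with ⟨w, hs⟩ | ⟨e, hcnt, hV, hE⟩
  · obtain ⟨p, c, hp, hc, hin, hout, hV, hE⟩ := suppress_data hs
    intro e he; rw [hE] at he
    rcases Multiset.mem_add.1 he with he | he
    · exact hf _ (Multiset.mem_filter.1 he).1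
    · rw [Multiset.mem_singleton] at he; subst he
      exact lt_trans (hf (w, c) hc) (hf (p, w) hp)
  · intro e' he'; rw [hE] at he'
    exact hf _ (Multiset.mem_of_mem_erase he')

/-- simplification steps restricted to ranked graphs. -/
def RS : Digraph' α → Digraph' α → Prop := fun G G' => SimpStep G G' ∧ G.Rank

theorem rs_local : ∀ (a b c : Digraph' α), RS a b → RS a c →
    ∃ d, Relation.ReflGen RS b d ∧ Relation.ReflTransGen RS c d := by
  rintro a b c ⟨h1, hR⟩ ⟨h2, -⟩
  rcases diamond hR h1 h2 with rfl | ⟨D, hb, hc⟩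
  · exact ⟨b, .refl, .refl⟩
  · exact ⟨D, .single ⟨hb, rank_step h1 hR⟩, .single ⟨hc, rank_step h2 hR⟩⟩

theorem rtg_lift {G H : Digraph' α} (hR : G.Rank)
    (h : Relation.ReflTransGen SimpStep G H) :
    Relation.ReflTransGen (RS (α := α)) G H ∧ H.Rank := by
  induction h with
  | refl => exact ⟨.refl, hR⟩
  | tail h1 h2 ih => exact ⟨ih.1.tail ⟨h2, ih.2⟩, rank_step h2 ih.2⟩

theorem normal_eq {H d : Digraph' α} (hterm : ∀ G'', ¬ SimpStep H G'')
    (h : Relation.ReflTransGen (RS (α := α)) H d) : d = H := by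
  rcases h.cases_head with h' | ⟨c, hc, -⟩
  · exact h'.symm
  · exact absurd hc.1 (hterm c)

theorem fullSimp_unique {G H1 H2 : Digraph' α} (hR : G.Rank)
    (h1 : FullSimp G H1) (h2 : FullSimp G H2) : H1 = H2 := by
  obtain ⟨r1, t1⟩ := h1; obtain ⟨r2, t2⟩ := h2
  obtain ⟨d, hd1, hd2⟩ := Relation.church_rosser rs_local (rtg_lift hR r1).1 (rtg_lift hR r2).1
  exact (normal_eq t1 hd1).symm.trans (normal_eq t2 hd2)

theorem fullSimp_unique_step {G G' H1 H2 : Digraph' α} (hR : G.Rank)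
    (hstep : SimpStep G G') (h1 : FullSimp G H1) (h2 : FullSimp G' H2) : H1 = H2 :=
  fullSimp_unique hR h1 ⟨Relation.ReflTransGen.head hstep h2.1, h2.2⟩

theorem no_step_of_E_eq_zero {G : Digraph' α} (hE : G.E = 0) (G'' : Digraph' α) :
    ¬ SimpStep G G'' := by
  rintro (⟨w, hin, -⟩ | ⟨e, hc, -⟩)
  · simp [inDeg, hE] at hin
  · rw [hE] at hc; simp at hc

theorem fullSimp_of_no_E {G H : Digraph' α} (hE : G.E = 0) (h : FullSimp G H) : H = G := by
  rcases h.1.cases_head with h' | ⟨c, hc, -⟩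
  · exact h'.symm
  · exact absurd hc (no_step_of_E_eq_zero hE _)

theorem isoOn_id (H : Digraph' α) (A : Finset α) : IsoOn H H A := by
  refine ⟨id, Set.bijOn_id _, fun x _ => rfl, ?_⟩
  exact ((Multiset.map_congr rfl (fun x _ => rfl)).trans (Multiset.map_id _)).symm

end Digraph'
namespace PhyloNet

variable {α : Type*} [DecidableEq α]

theorem decEq_irrel {β : Type*} (i1 i2 : DecidableEq β) : i1 = i2 := by
  funext a b; exact Subsingleton.elim _ _

theorem outDeg_irrel {β : Type*} (i1 i2 : DecidableEq β) (G : Digraph' β) (v : β) :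
    @Digraph'.outDeg β i1 G v = @Digraph'.outDeg β i2 G v := by rw [decEq_irrel i1 i2]

theorem inDeg_irrel {β : Type*} (i1 i2 : DecidableEq β) (G : Digraph' β) (v : β) :
    @Digraph'.inDeg β i1 G v = @Digraph'.inDeg β i2 G v := by rw [decEq_irrel i1 i2]

theorem count_irrel {β : Type*} (i1 i2 : DecidableEq β) (s : Multiset β) (x : β) :
    @Multiset.count β i1 x s = @Multiset.count β i2 x s := by rw [decEq_irrel i1 i2]

theorem mem_X_V (M : PhyloNet α) {x : α} (hx : x ∈ M.X) : x ∈ M.G.V := by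
  rcases M.binary with ⟨hV, hE, hX⟩ | ⟨-, -, hleaf, -, -⟩
  · rw [hX] at hx; rw [hV]; simpa using hx
  · exact (hleaf x hx).1

theorem leaf_out (M : PhyloNet α) {x : α} (hx : x ∈ M.X) : M.G.outDeg x = 0 := by
  rcases M.binary with ⟨hV, hE, hX⟩ | ⟨-, -, hleaf, -, -⟩
  · simp [Digraph'.outDeg, hE]
  · exact (outDeg_irrel _ _ _ _).trans ((hleaf x hx).2.2)

theorem count_edge (M : PhyloNet α) {e : α × α} (he : e ∈ M.G.E) : M.G.E.count e = 1 := by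
  exact le_antisymm (le_of_eq_of_le (count_irrel _ _ _ _) (M.noParallel e))
    (Multiset.count_pos.2 he)

theorem nodup_path (M : PhyloNet α) {p : List α} (hp : M.G.IsPath p) : p.Nodup :=
  Digraph'.nodup_of_path M.wf M.acyclic hp

theorem lsa_unique (M : PhyloNet α) {A : Finset α} (hA : A ⊆ M.X) {x0 : α} (hx0 : x0 ∈ A)
    {u v : α} (hu : M.G.IsLowestSA M.root A u) (hv : M.G.IsLowestSA M.root A v) : u = v := by
  by_contra hne
  obtain ⟨q, hq⟩ := M.reach x0 (M.mem_X_V (hA hx0))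
  have huq : u ∈ q := hu.1 x0 hx0 q hq
  have hvq : v ∈ q := hv.1 x0 hx0 q hq
  rcases Digraph'.reaches_comparable M.wf hq.1 huq hvq with h | h
  · exact hu.2 v hv.1 (Ne.symm hne) h
  · exact hv.2 u hu.1 hne h

theorem lsa_singleton (M : PhyloNet α) {x : α} (hx : x ∈ M.X) {r : α}
    (hr : M.G.IsLowestSA M.root {x} r) : r = x := by
  by_contra hne
  obtain ⟨q, hq⟩ := M.reach x (M.mem_X_V hx)
  have hrq : r ∈ q := hr.1 x (Finset.mem_singleton_self x) q hq
  have hreach : M.G.Reaches r x := Digraph'.reaches_of_mem_path hq.1 hq.2.2 hrq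
  have hSAx : M.G.StableAncestor M.root {x} x := by
    intro y hy p hp
    rw [Finset.mem_singleton] at hy; subst hy
    exact Digraph'.mem_of_getLast?' hp.2.2
  exact hr.2 x hSAx (Ne.symm hne) hreach

theorem path_self (M : PhyloNet α) {x : α} (hx : x ∈ M.X) {p : List α}
    (hp : M.G.PathFrom x x p) : p = [x] := by
  obtain ⟨⟨hne, hmem, hch⟩, hh, hl⟩ := hp
  obtain ⟨y, q, rfl⟩ := List.exists_cons_of_ne_nil hne
  obtain rfl : y = x := by simpa using hh
  cases q with
  | nil => rfl
  | cons z q' =>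
    exact absurd (List.isChain_cons_cons.1 hch).1 (Digraph'.not_edge_of_outDeg_zero (M.leaf_out hx))

theorem pathGraph_singleton (M : PhyloNet α) {x : α} (hx : x ∈ M.X) :
    M.G.pathGraph x {x} = ⟨{x}, 0⟩ := by
  have hxV : x ∈ M.G.V := M.mem_X_V hx
  refine Digraph'.ext' ?_ ?_
  · ext v
    simp only [Digraph'.pathGraph, Finset.mem_filter, Finset.mem_singleton]
    constructor
    · rintro ⟨hv, y, hy, p, hp, hvp⟩
      subst hy
      rw [M.path_self hx hp] at hvp; simpa using hvp
    · rintro rfl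
      exact ⟨hxV, v, rfl, [v],
        ⟨⟨by simp, by simpa using hxV, by simp [List.Chain']⟩, by simp, by simp⟩, by simp⟩
  · show _ = (0 : Multiset (α × α))
    simp only [Digraph'.pathGraph]
    rw [Multiset.filter_eq_nil]
    rintro e he ⟨y, hy, p, hp, hep⟩
    rw [Finset.mem_singleton] at hy; subst hy
    rw [M.path_self hx hp] at hep; simp at hep

theorem fullSimp_singleton (M : PhyloNet α) {x : α} (hx : x ∈ M.X) {r : α} {H : Digraph' α}
    (hr : M.G.IsLowestSA M.root {x} r) (hs : Digraph'.FullSimp (M.G.pathGraph r {x}) H) :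
    H = ⟨{x}, 0⟩ := by
  obtain rfl := M.lsa_singleton hx hr
  rw [M.pathGraph_singleton hx] at hs
  exact Digraph'.fullSimp_of_no_E rfl hs

theorem pathGraph_empty (G : Digraph' α) (r : α) : G.pathGraph r ∅ = ⟨∅, 0⟩ := by
  refine Digraph'.ext' ?_ ?_
  · ext v; simp [Digraph'.pathGraph]
  · show _ = (0 : Multiset (α × α))
    simp only [Digraph'.pathGraph]
    rw [Multiset.filter_eq_nil]
    rintro e he ⟨y, hy, -⟩
    simp at hy

end PhyloNet
set_option maxHeartbeats 1000000 in
/-- if `N'` is obtained from `N` by reducing the leaf `b` of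
a cherry `{a, b}`, then for every `A ⊆ X − {b}` the networks exhibited by
`N` and `N'` on `A` are isomorphic. -/
theorem exhibited_iso_of_reduceCherry
    {α : Type*} [DecidableEq α] (N N' : PhyloNet α) (a b : α)
    (h : N.ReduceCherry a b N')
    (A : Finset α) (hA : A ⊆ N.X.erase b)
    (HA HA' : Digraph' α)
    (h1 : N.Exhibits A HA) (h2 : N'.Exhibits A HA') :
    Digraph'.IsoOn HA HA' A := by
  obtain ⟨⟨haX, hbX, hab, -⟩, hX', pp, hpa, hpb, hbr⟩ := h
  obtain ⟨r, hr, hfs⟩ := h1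
  obtain ⟨r', hr', hfs'⟩ := h2
  -- trivial case: A = ∅
  rcases Finset.eq_empty_or_nonempty A with rfl | hAne
  · rw [PhyloNet.pathGraph_empty] at hfs hfs'
    obtain rfl := Digraph'.fullSimp_of_no_E rfl hfs
    obtain rfl := Digraph'.fullSimp_of_no_E rfl hfs'
    exact Digraph'.isoOn_id _ _
  -- trivial case: A = {a}
  by_cases hAa : A ⊆ {a}
  · obtain rfl : A = {a} := by
      rcases Finset.subset_singleton_iff.1 hAa with rfl | rfl
      · exact absurd rfl hAne.ne_empty
      · rfl
    have e1 := N.fullSimp_singleton haX hr hfs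
    have e2 := N'.fullSimp_singleton (by rw [hX']; exact Finset.mem_erase.2 ⟨hab, haX⟩) hr' hfs'
    rw [e1, e2]; exact Digraph'.isoOn_id _ _
  -- main case
  obtain ⟨x0, hx0A, hx0a⟩ : ∃ x0 ∈ A, x0 ≠ a := by
    by_contra hcon; push_neg at hcon
    exact hAa (fun y hy => Finset.mem_singleton.2 (hcon y hy))
  have hx0b : x0 ≠ b := (Finset.mem_erase.1 (hA hx0A)).1
  have hx0X : x0 ∈ N.X := (Finset.mem_erase.1 (hA hx0A)).2
  have hAX : ∀ y ∈ A, y ≠ b ∧ y ∈ N.X := fun y hy =>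
    ⟨(Finset.mem_erase.1 (hA hy)).1, (Finset.mem_erase.1 (hA hy)).2⟩
  -- structural facts about N
  have hbinN := N.binary
  rcases hbinN with ⟨-, hE0, -⟩ | ⟨hrin, hrout, hXdeg, hsink, hint⟩
  · rw [hE0] at hpa; simp at hpa
  have haleaf : N.G.outDeg a = 0 := N.leaf_out haX
  have hbleaf : N.G.outDeg b = 0 := N.leaf_out hbX
  have hain : N.G.inDeg a = 1 :=
    (PhyloNet.inDeg_irrel _ _ _ _).trans (hXdeg a haX).2.1
  have hbin : N.G.inDeg b = 1 :=
    (PhyloNet.inDeg_irrel _ _ _ _).trans (hXdeg b hbX).2.1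
  have hppV : pp ∈ N.G.V := (N.wf _ hpa).1
  have hppa : pp ≠ a := fun heq =>
    Digraph'.not_edge_of_outDeg_zero haleaf (by rw [heq] at hpa; exact hpa)
  have hppb : pp ≠ b := fun heq =>
    Digraph'.not_edge_of_outDeg_zero hbleaf (by rw [heq] at hpb; exact hpb)
  have hppX : pp ∉ N.X := fun hmem =>
    Digraph'.not_edge_of_outDeg_zero (N.leaf_out hmem) hpa
  have hua : ∀ u', (u', a) ∈ N.G.E → u' = pp := by
    intro u' hu'
    have m1 : (u', a) ∈ N.G.E.filter (fun e => e.2 = a) := Multiset.mem_filter.2 ⟨hu', rfl⟩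
    have m2 : (pp, a) ∈ N.G.E.filter (fun e => e.2 = a) := Multiset.mem_filter.2 ⟨hpa, rfl⟩
    have := Digraph'.eq_of_mem_card_one hain m1 m2
    exact (Prod.mk.injEq _ _ _ _ ▸ this).1
  have hub : ∀ u', (u', b) ∈ N.G.E → u' = pp := by
    intro u' hu'
    have m1 : (u', b) ∈ N.G.E.filter (fun e => e.2 = b) := Multiset.mem_filter.2 ⟨hu', rfl⟩
    have m2 : (pp, b) ∈ N.G.E.filter (fun e => e.2 = b) := Multiset.mem_filter.2 ⟨hpb, rfl⟩
    have := Digraph'.eq_of_mem_card_one hbin m1 m2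
    exact (Prod.mk.injEq _ _ _ _ ▸ this).1
  -- out-neighbours of pp are exactly a, b (once we know outDeg pp = 2)
  have hout_pp_of : N.G.outDeg pp = 2 → ∀ y, (pp, y) ∈ N.G.E → y = a ∨ y = b := by
    intro h2 y hy
    by_contra hcon; push_neg at hcon
    refine Digraph'.card_two_three_distinct h2
      (Multiset.mem_filter.2 ⟨hy, rfl⟩) (Multiset.mem_filter.2 ⟨hpa, rfl⟩)
      (Multiset.mem_filter.2 ⟨hpb, rfl⟩) ?_ ?_ ?_ <;>
      simp [Prod.ext_iff, hcon.1, hcon.2, hab]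
  -- rule out the root branch
  rcases hbr with ⟨hproot, hV'1, hE'1, hroot'1⟩ | ⟨hpne, hroot', hsup⟩
  · exfalso
    have hrout' : N.G.outDeg N.root = 2 := (PhyloNet.outDeg_irrel _ _ _ _).trans hrout
    have hout_pp := hout_pp_of (hproot ▸ hrout')
    -- every leaf is a or b
    have : x0 = a ∨ x0 = b := by
      obtain ⟨q, hq⟩ := N.reach x0 (N.mem_X_V hx0X)
      obtain ⟨y, q', rfl⟩ := List.exists_cons_of_ne_nil hq.1.1
      obtain rfl : y = N.root := by simpa using hq.2.1
      cases q' with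
      | nil =>
        exfalso
        have hxr : x0 = N.root := by
          have := hq.2.2; simp at this; exact this.symm
        rw [hxr, ← hproot] at hx0X
        exact hppX hx0X
      | cons z q'' =>
        have hz : (N.root, z) ∈ N.G.E := (List.isChain_cons_cons.1 hq.1.2.2).1
        have hzab : z = a ∨ z = b := hout_pp z (by rw [hproot]; exact hz)
        have hzleaf : N.G.outDeg z = 0 := by
          rcases hzab with rfl | rfl <;> assumption
        have hlast := Digraph'.leaf_last hq.1 (by simp) hzleaf
        have : x0 = z := by
          have := hq.2.2.symm.trans hlast; simpa using this
        rw [this]; exact hzab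
    rcases this with h' | h'
    · exact hx0a h'
    · exact hx0b h'
  -- branch 2: unpack the suppression
  obtain ⟨g, c', hgpp', hppc', hinpp', houtpp', hV'eq, hE'eq⟩ := Digraph'.suppress_data hsup
  have hdelE : (N.G.deleteVertex b).E = N.G.E.filter (fun e => e.1 ≠ b ∧ e.2 ≠ b) := by
    simp [Digraph'.deleteVertex]
  have hgpp : (g, pp) ∈ N.G.E := by
    rw [hdelE] at hgpp'; exact (Multiset.mem_filter.1 hgpp').1
  obtain ⟨hinpp1, houtpp2⟩ : N.G.inDeg pp = 1 ∧ N.G.outDeg pp = 2 := by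
    rcases hint pp hppV hpne hppX with ⟨hd1, hd2⟩ | ⟨hd1, hd2⟩
    · exact ⟨(PhyloNet.inDeg_irrel _ _ _ _).trans hd1,
        (PhyloNet.outDeg_irrel _ _ _ _).trans hd2⟩
    · exfalso
      have hd1' : N.G.outDeg pp = 1 := (PhyloNet.outDeg_irrel _ _ _ _).trans hd2
      have m1 : (pp, a) ∈ N.G.E.filter (fun e => e.1 = pp) := Multiset.mem_filter.2 ⟨hpa, rfl⟩
      have m2 : (pp, b) ∈ N.G.E.filter (fun e => e.1 = pp) := Multiset.mem_filter.2 ⟨hpb, rfl⟩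
      exact hab (Prod.mk.injEq _ _ _ _ ▸ (Digraph'.eq_of_mem_card_one hd1' m1 m2)).2
  have hout_pp := hout_pp_of houtpp2
  have hupp : ∀ u', (u', pp) ∈ N.G.E → u' = g := by
    intro u' hu'
    have m1 : (u', pp) ∈ N.G.E.filter (fun e => e.2 = pp) := Multiset.mem_filter.2 ⟨hu', rfl⟩
    have m2 : (g, pp) ∈ N.G.E.filter (fun e => e.2 = pp) := Multiset.mem_filter.2 ⟨hgpp, rfl⟩
    exact (Prod.mk.injEq _ _ _ _ ▸ (Digraph'.eq_of_mem_card_one hinpp1 m1 m2)).1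
  obtain rfl : a = c' := by
    rw [hdelE] at hppc'
    obtain ⟨hmem, -, hcb⟩ := Multiset.mem_filter.1 hppc'
    rcases hout_pp c' hmem with h' | h'
    · exact h'.symm
    · exact absurd h' hcb
  have hga : g ≠ a := fun heq =>
    Digraph'.not_edge_of_outDeg_zero haleaf (by rw [heq] at hgpp; exact hgpp)
  have hgb : g ≠ b := fun heq =>
    Digraph'.not_edge_of_outDeg_zero hbleaf (by rw [heq] at hgpp; exact hgpp)
  have hgppne : g ≠ pp := fun heq =>
    N.acyclic (pp, pp) (by rw [heq] at hgpp; exact hgpp) (Digraph'.reach_refl N.wf hppV)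
  have hnga : (g, a) ∉ N.G.E := fun hmem => hgppne (hua g hmem)
  -- structure of N'
  have hV'full : N'.G.V = (N.G.V.erase b).erase pp := by
    rw [hV'eq]; simp [Digraph'.deleteVertex]
  have hE'full : N'.G.E =
      (N.G.E.filter (fun e => e.1 ≠ b ∧ e.2 ≠ b)).filter (fun e => e.1 ≠ pp ∧ e.2 ≠ pp)
        + {(g, a)} := by
    rw [hE'eq, hdelE]
  have hmemE' : ∀ e : α × α, e ∈ N'.G.E ↔
      (e ∈ N.G.E ∧ e.1 ≠ b ∧ e.2 ≠ b ∧ e.1 ≠ pp ∧ e.2 ≠ pp) ∨ e = (g, a) := by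
    intro e
    rw [hE'full, Multiset.mem_add, Multiset.mem_filter, Multiset.mem_filter,
      Multiset.mem_singleton]
    tauto
  have hVsub : ∀ v ∈ N'.G.V, v ∈ N.G.V ∧ v ≠ b ∧ v ≠ pp := by
    intro v hv
    rw [hV'full, Finset.mem_erase, Finset.mem_erase] at hv
    exact ⟨hv.2.2, hv.2.1, hv.1⟩
  have hVmem : ∀ v ∈ N.G.V, v ≠ b → v ≠ pp → v ∈ N'.G.V := by
    intro v hv hb1 hp1
    rw [hV'full, Finset.mem_erase, Finset.mem_erase]
    exact ⟨hp1, hb1, hv⟩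
  have haX' : a ∈ N'.X := by rw [hX']; exact Finset.mem_erase.2 ⟨hab, haX⟩
  have haleaf' : N'.G.outDeg a = 0 := N'.leaf_out haX'
  have hua' : ∀ u', (u', a) ∈ N'.G.E → u' = g := by
    intro u' hu'
    rcases (hmemE' _).1 hu' with h' | h'
    · exact absurd (hua u' h'.1) h'.2.2.2.1
    · exact congrArg Prod.fst h'
  -- leaves occur only at the end of paths
  have hend : ∀ (G : Digraph' α) {p : List α} {x v : α}, G.IsPath p → p.getLast? = some x →
      v ∈ p → G.outDeg v = 0 → v = x := by
    intro G p x v hp hl hv hd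
    have hh := Digraph'.leaf_last hp hv hd
    rw [hl] at hh
    exact (by simpa using hh : x = v).symm
  -- pp does not occur on N-paths to leaves other than a, b
  have hppnotin : ∀ {p : List α} {u x : α}, N.G.PathFrom u x p → x ≠ a → x ≠ b → x ∈ N.X →
      pp ∉ p := by
    intro p u x hp hxa hxb hxX hppp
    obtain ⟨q, hq⟩ := Digraph'.reaches_of_mem_path hp.1 hp.2.2 hppp
    obtain ⟨y, q', rfl⟩ := List.exists_cons_of_ne_nil hq.1.1
    obtain rfl : pp = y := by simpa using hq.2.1.symm
    cases q' with
    | nil =>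
      have hpx : pp = x := by simpa using hq.2.2
      exact hppX (hpx ▸ hxX)
    | cons z q'' =>
      have hz : (pp, z) ∈ N.G.E := (List.isChain_cons_cons.1 hq.1.2.2).1
      have hzleaf : N.G.outDeg z = 0 := by
        rcases hout_pp z hz with h' | h' <;> rw [h'] <;> assumption
      have hzx : z = x := hend N.G hq.1 hq.2.2 (by simp) hzleaf
      rcases hout_pp z hz with h' | h'
      · exact hxa (hzx.symm.trans h')
      · exact hxb (hzx.symm.trans h')
  have hanotin : ∀ {p : List α} {u x : α}, N.G.PathFrom u x p → x ≠ a → a ∉ p := by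
    intro p u x hp hxa hap
    exact hxa (hend N.G hp.1 hp.2.2 hap haleaf).symm
  have hbnotin : ∀ {p : List α} {u x : α}, N.G.PathFrom u x p → x ≠ b → b ∉ p := by
    intro p u x hp hxb hbp
    exact hxb (hend N.G hp.1 hp.2.2 hbp hbleaf).symm
  have hanotin' : ∀ {p : List α} {u x : α}, N'.G.PathFrom u x p → x ≠ a → a ∉ p := by
    intro p u x hp hxa hap
    exact hxa (hend N'.G hp.1 hp.2.2 hap haleaf').symm
  -- transfer N-paths to N'-paths (target a leaf other than a, b)
  have hT1 : ∀ {p : List α} {u x : α}, N.G.PathFrom u x p → x ≠ a → x ≠ b → x ∈ N.X →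
      N'.G.PathFrom u x p := by
    intro p u x hp hxa hxb hxX
    have hppp := hppnotin hp hxa hxb hxX
    have hap := hanotin hp hxa
    have hbp := hbnotin hp hxb
    refine ⟨⟨hp.1.1, ?_, ?_⟩, hp.2.1, hp.2.2⟩
    · intro v hv
      exact hVmem v (hp.1.2.1 v hv) (fun heq => hbp (heq ▸ hv)) (fun heq => hppp (heq ▸ hv))
    · rw [Digraph'.chain'_iff_zip]
      intro e he
      obtain ⟨he1, he2⟩ := Digraph'.mem_of_zip_left he
      have heE := Digraph'.edge_of_mem_zip hp.1 he
      exact (hmemE' e).2 (Or.inl ⟨heE, fun heq => hbp (heq ▸ he1), fun heq => hbp (heq ▸ he2),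
        fun heq => hppp (heq ▸ he1), fun heq => hppp (heq ▸ he2)⟩)
  -- transfer N'-paths avoiding a to N-paths
  have hT2 : ∀ {p : List α} {u x : α}, N'.G.PathFrom u x p → a ∉ p → N.G.PathFrom u x p := by
    intro p u x hp hap
    refine ⟨⟨hp.1.1, ?_, ?_⟩, hp.2.1, hp.2.2⟩
    · intro v hv; exact (hVsub v (hp.1.2.1 v hv)).1
    · rw [Digraph'.chain'_iff_zip]
      intro e he
      obtain ⟨he1, he2⟩ := Digraph'.mem_of_zip_left he
      have heE := Digraph'.edge_of_mem_zip hp.1 he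
      rcases (hmemE' e).1 heE with h' | h'
      · exact h'.1
      · exfalso
        have h2 : e.2 = a := congrArg Prod.snd h'
        rw [h2] at he2
        exact hap he2
  have hT2' : ∀ {p : List α} {u x : α}, N'.G.PathFrom u x p → x ≠ a → N.G.PathFrom u x p :=
    fun hp hxa => hT2 hp (hanotin' hp hxa)
    -- decomposition of N-paths ending at a, and transfer to N'
  have hC3 : ∀ {p : List α} {u : α}, N.G.PathFrom u a p → u ≠ a → u ≠ pp →
      ∃ q0, p = q0 ++ [pp, a] ∧ q0 ≠ [] ∧ q0.getLast? = some g ∧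
        pp ∉ q0 ∧ a ∉ q0 ∧ b ∉ q0 ∧ N'.G.PathFrom u a (q0 ++ [a]) := by
    intro p u hp hu_a hu_pp
    rcases List.eq_nil_or_concat p with rfl | ⟨q', z, hpz⟩
    · exact absurd rfl hp.1.1
    rw [List.concat_eq_append] at hpz
    subst hpz
    obtain rfl : a = z := by
      have hh := hp.2.2
      rw [List.getLast?_concat] at hh
      simpa using hh.symm
    have hq'ne : q' ≠ [] := by
      rintro rfl
      have hh := hp.2.1
      simp at hh
      exact hu_a hh.symm
    have hch := hp.1.2.2
    simp only [List.Chain'] at hch; rw [List.isChain_append] at hch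
    obtain ⟨hchq', -, hcross⟩ := hch
    rcases List.eq_nil_or_concat q' with rfl | ⟨q0, y, hq0⟩
    · exact absurd rfl hq'ne
    rw [List.concat_eq_append] at hq0
    subst hq0
    have hy : (y, a) ∈ N.G.E := by
      refine hcross y ?_ a rfl
      rw [List.getLast?_concat]; rfl
    obtain rfl : pp = y := (hua y hy).symm
    have hpeq : (q0 ++ [pp]) ++ [a] = q0 ++ [pp, a] := by simp
    have hp1' : N.G.IsPath (q0 ++ [pp, a]) := hpeq ▸ hp.1
    have hnd := N.nodup_path hp.1
    rw [List.nodup_append, List.nodup_append] at hnd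
    have hppq0 : pp ∉ q0 := fun hmem => hnd.1.2.2 pp hmem pp (by simp) rfl
    have haq0 : a ∉ q0 := fun hmem => hnd.2.2 a (show a ∈ q0 ++ [pp] by simp [hmem]) a (by simp) rfl
    have hbq0 : b ∉ q0 := by
      intro hmem
      have hba : b = a := hend N.G hp.1 hp.2.2 (by simp [hmem]) hbleaf
      exact hab hba.symm
    have hq0ne : q0 ≠ [] := by
      rintro rfl
      have hh := hp.2.1
      simp at hh
      exact hu_pp hh.symm
    obtain ⟨w, hwlast⟩ : ∃ w, q0.getLast? = some w := by
      rcases List.eq_nil_or_concat q0 with rfl | ⟨q1, w, hq1⟩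
      · exact absurd rfl hq0ne
      · exact ⟨w, by rw [hq1, List.concat_eq_append, List.getLast?_concat]⟩
    have hwpp : (w, pp) ∈ N.G.E := by
      rw [List.isChain_append] at hchq'
      exact hchq'.2.2 w hwlast pp rfl
    obtain rfl : g = w := (hupp w hwpp).symm
    have hmemq0 : ∀ v ∈ q0, v ∈ N.G.V ∧ v ≠ b ∧ v ≠ pp :=
      fun v hv => ⟨hp.1.2.1 v (by simp [hv]), fun heq => hbq0 (heq ▸ hv),
        fun heq => hppq0 (heq ▸ hv)⟩
    have hchq0' : List.Chain' (fun u v => (u, v) ∈ N'.G.E) q0 := by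
      rw [Digraph'.chain'_iff_zip]
      intro e he
      obtain ⟨he1, he2⟩ := Digraph'.mem_of_zip_left he
      have heE : e ∈ N.G.E := Digraph'.edge_of_mem_zip hp1'
        ((Digraph'.mem_zip_append q0 [pp, a] e).2 (Or.inl he))
      exact (hmemE' e).2 (Or.inl ⟨heE, (hmemq0 _ he1).2.1, (hmemq0 _ he2).2.1,
        (hmemq0 _ he1).2.2, (hmemq0 _ he2).2.2⟩)
    have hhead : q0.head? = some u := by
      have hh := hp.2.1
      rw [show (q0 ++ [pp]) ++ [a] = q0 ++ ([pp] ++ [a]) from by simp,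
        List.head?_append_of_ne_nil _ hq0ne] at hh
      exact hh
    refine ⟨q0, by simp, hq0ne, hwlast, hppq0, haq0, hbq0,
      ⟨⟨by simp, ?_, ?_⟩, ?_, by rw [List.getLast?_concat]⟩⟩
    · intro v hv
      rcases List.mem_append.1 hv with hv | hv
      · exact hVmem v (hmemq0 v hv).1 (hmemq0 v hv).2.1 (hmemq0 v hv).2.2
      · rw [List.mem_singleton.1 hv]; exact N'.mem_X_V haX'
    · simp only [List.Chain']; rw [List.isChain_append]
      refine ⟨hchq0', by simp, ?_⟩
      intro x hx y' hy'
      have hxg : x = g := by rw [hwlast] at hx; exact (by simpa using hx : g = x).symm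
      have hya : y' = a := (by simpa using hy' : a = y').symm
      rw [hxg, hya]
      exact (hmemE' (g, a)).2 (Or.inr rfl)
    · rw [List.head?_append_of_ne_nil _ hq0ne]
      exact hhead
  -- decomposition of N'-paths ending at a, and transfer to N
  have hC4 : ∀ {p : List α} {u : α}, N'.G.PathFrom u a p → u ≠ a →
      ∃ q1, p = q1 ++ [a] ∧ q1 ≠ [] ∧ q1.getLast? = some g ∧ a ∉ q1 ∧
        N.G.PathFrom u a (q1 ++ [pp, a]) := by
    intro p u hp hu_a
    rcases List.eq_nil_or_concat p with rfl | ⟨q1, z, hpz⟩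
    · exact absurd rfl hp.1.1
    rw [List.concat_eq_append] at hpz
    subst hpz
    obtain rfl : a = z := by
      have hh := hp.2.2
      rw [List.getLast?_concat] at hh
      simpa using hh.symm
    have hq1ne : q1 ≠ [] := by
      rintro rfl
      have hh := hp.2.1
      simp at hh
      exact hu_a hh.symm
    have hch := hp.1.2.2
    simp only [List.Chain'] at hch; rw [List.isChain_append] at hch
    obtain ⟨hchq1, -, hcross⟩ := hch
    have hnd := N'.nodup_path hp.1
    rw [List.nodup_append] at hnd
    have haq1 : a ∉ q1 := fun hmem => hnd.2.2 a hmem a (by simp) rfl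
    obtain ⟨w, hwlast⟩ : ∃ w, q1.getLast? = some w := by
      rcases List.eq_nil_or_concat q1 with rfl | ⟨q2, w, hq2⟩
      · exact absurd rfl hq1ne
      · exact ⟨w, by rw [hq2, List.concat_eq_append, List.getLast?_concat]⟩
    have hwa : (w, a) ∈ N'.G.E := hcross w hwlast a rfl
    obtain rfl : g = w := (hua' w hwa).symm
    have hmemq1 : ∀ v ∈ q1, v ∈ N.G.V ∧ v ≠ b ∧ v ≠ pp :=
      fun v hv => hVsub v (hp.1.2.1 v (by simp [hv]))
    have hchq1N : List.Chain' (fun u v => (u, v) ∈ N.G.E) q1 := by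
      rw [Digraph'.chain'_iff_zip]
      intro e he
      obtain ⟨he1, he2⟩ := Digraph'.mem_of_zip_left he
      have heE : e ∈ N'.G.E := Digraph'.edge_of_mem_zip hp.1
        ((Digraph'.mem_zip_append q1 [a] e).2 (Or.inl he))
      rcases (hmemE' e).1 heE with h' | h'
      · exact h'.1
      · exfalso
        have h2 : e.2 = a := congrArg Prod.snd h'
        rw [h2] at he2
        exact haq1 he2
    have hhead : q1.head? = some u := by
      have hh := hp.2.1
      rw [List.head?_append_of_ne_nil _ hq1ne] at hh
      exact hh
    refine ⟨q1, rfl, hq1ne, hwlast, haq1, ⟨⟨by simp, ?_, ?_⟩, ?_, ?_⟩⟩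
    · intro v hv
      rcases List.mem_append.1 hv with hv | hv
      · exact (hmemq1 v hv).1
      · rcases List.mem_cons.1 hv with rfl | hv
        · exact hppV
        · rw [List.mem_singleton.1 hv]; exact N.mem_X_V haX
    · simp only [List.Chain']; rw [List.isChain_append]
      refine ⟨hchq1N, ?_, ?_⟩
      · rw [List.isChain_pair]; exact hpa
      · intro x hx y' hy'
        have hxg : x = g := by rw [hwlast] at hx; exact (by simpa using hx : g = x).symm
        have hyp : y' = pp := (by simpa using hy' : pp = y').symm
        rw [hxg, hyp]
        exact hgpp
    · rw [List.head?_append_of_ne_nil _ hq1ne]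
      exact hhead
    · rw [show q1 ++ [pp, a] = (q1 ++ [pp]) ++ [a] from by simp, List.getLast?_concat]
    -- r avoids a, b, pp
  obtain ⟨qx0, hqx0⟩ := N.reach x0 (N.mem_X_V hx0X)
  have hrq := hr.1 x0 hx0A qx0 hqx0
  have hra : r ≠ a := fun heq => hanotin hqx0 hx0a (heq ▸ hrq)
  have hrb : r ≠ b := fun heq => hbnotin hqx0 hx0b (heq ▸ hrq)
  have hrpp : r ≠ pp := fun heq => hppnotin hqx0 hx0a hx0b hx0X (heq ▸ hrq)
  have hrout2 : N.G.outDeg N.root = 2 := (PhyloNet.outDeg_irrel _ _ _ _).trans hrout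
  have hroota : N.root ≠ a := by
    intro heq; rw [heq] at hrout2; rw [haleaf] at hrout2; omega
  have hrootpp : N.root ≠ pp := Ne.symm hpne
  -- stable ancestors transfer from N' to N
  have hSA'N : ∀ v, N'.G.StableAncestor N'.root A v → N.G.StableAncestor N.root A v := by
    intro v hv x hx p hp
    obtain ⟨hxb', hxX'⟩ := hAX x hx
    by_cases hxa : x = a
    · obtain rfl : a = x := hxa.symm
      obtain ⟨q0, hpeq, hq0ne, hq0last, hppq0, haq0, hbq0, hp'⟩ := hC3 hp hroota hrootpp
      have hv' := hv a hx _ (by rw [hroot']; exact hp')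
      rw [hpeq]
      rcases List.mem_append.1 hv' with h' | h'
      · simp [h']
      · simp at h'; simp [h']
    · have hp' := hT1 hp hxa hxb' hxX'
      exact hv x hx p (by rw [hroot']; exact hp')
  -- reachability from r transfers from N' to N
  have hRtrans : ∀ {v : α}, N'.G.Reaches r v → N.G.Reaches r v := by
    intro v hv
    obtain ⟨p, hp⟩ := hv
    by_cases hap : a ∈ p
    · obtain rfl : a = v := hend N'.G hp.1 hp.2.2 hap haleaf'
      obtain ⟨q1, -, -, -, -, hpN⟩ := hC4 hp hra
      exact ⟨_, hpN⟩
    · exact ⟨p, hT2 hp hap⟩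
  -- r is a stable ancestor of A in N'
  have hrSA' : N'.G.StableAncestor N'.root A r := by
    intro x hx p hp
    obtain ⟨hxb', hxX'⟩ := hAX x hx
    rw [hroot'] at hp
    by_cases hxa : x = a
    · obtain rfl : a = x := hxa.symm
      obtain ⟨q1, hpeq, hq1ne, hq1last, haq1, hpN⟩ := hC4 hp hroota
      have hrmem := hr.1 a hx _ hpN
      rw [hpeq]
      rcases List.mem_append.1 hrmem with h' | h'
      · simp [h']
      · simp at h'
        rcases h' with h' | h'
        · exact absurd h' hrpp
        · exact absurd h' hra
    · have hpN := hT2' hp hxa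
      exact hr.1 x hx p hpN
  have hrLSA' : N'.G.IsLowestSA N'.root A r := by
    refine ⟨hrSA', ?_⟩
    intro v hv hvr hreach
    exact hr.2 v (hSA'N v hv) hvr (hRtrans hreach)
  have hAX' : A ⊆ N'.X := fun y hy => by
    rw [hX']; exact Finset.mem_erase.2 ⟨(hAX y hy).1, (hAX y hy).2⟩
  obtain rfl : r = r' := (N'.lsa_unique hAX' hx0A hr' hrLSA').symm
    -- ranks of the path graphs
  have hRankN : (N.G.pathGraph r A).Rank := by
    obtain ⟨f, hf⟩ := Digraph'.rank_of N.G N.wf N.acyclic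
    refine ⟨f, fun e he => hf e ?_⟩
    simp only [Digraph'.pathGraph] at he
    exact (Multiset.mem_filter.1 he).1
  have hRankN' : (N'.G.pathGraph r A).Rank := by
    obtain ⟨f, hf⟩ := Digraph'.rank_of N'.G N'.wf N'.acyclic
    refine ⟨f, fun e he => hf e ?_⟩
    simp only [Digraph'.pathGraph] at he
    exact (Multiset.mem_filter.1 he).1
  by_cases hcase : a ∈ A
  · -- a ∈ A : the path graph of N' is obtained from that of N by suppressing pp
    obtain ⟨qa0, hqa⟩ := N.reach a (N.mem_X_V haX)
    have hrmem := hr.1 a hcase qa0 hqa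
    obtain ⟨πa, hπsub, hπ⟩ := Digraph'.path_suffix hqa.1 hqa.2.2 hrmem
    obtain ⟨qq0, hπeq, hqq0ne, hqq0last, hppqq0, haqq0, hbqq0, hπ'⟩ := hC3 hπ hra hrpp
    have hQgpp : ∃ x ∈ A, ∃ p, N.G.PathFrom r x p ∧ (g, pp) ∈ p.zip p.tail :=
      ⟨a, hcase, πa, hπ, by
        rw [hπeq]
        exact (Digraph'.mem_zip_append qq0 [pp, a] (g, pp)).2
          (Or.inr (Or.inr ⟨hqq0last, rfl⟩))⟩
    have hQppa : ∃ x ∈ A, ∃ p, N.G.PathFrom r x p ∧ (pp, a) ∈ p.zip p.tail :=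
      ⟨a, hcase, πa, hπ, by
        rw [hπeq]
        refine (Digraph'.mem_zip_append qq0 [pp, a] (pp, a)).2 (Or.inr (Or.inl ?_))
        simp [List.zip_cons_cons]⟩
    have hQ'ga : ∃ x ∈ A, ∃ p, N'.G.PathFrom r x p ∧ (g, a) ∈ p.zip p.tail :=
      ⟨a, hcase, _, hπ', (Digraph'.mem_zip_append qq0 [a] (g, a)).2
        (Or.inr (Or.inr ⟨hqq0last, rfl⟩))⟩
    have hPGin : (N.G.pathGraph r A).E.filter (fun e => e.2 = pp) = {(g, pp)} := by
      show (N.G.E.filter _).filter _ = _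
      rw [Multiset.filter_filter]
      refine Digraph'.filter_eq_singleton hgpp ⟨rfl, hQgpp⟩ (N.count_edge hgpp) ?_
      rintro e he ⟨h2, -⟩
      have h1 : e.1 = g := hupp e.1 (by
        rw [show e = (e.1, pp) from Prod.ext rfl h2] at he; exact he)
      exact Prod.ext h1 h2
    have hPGout : (N.G.pathGraph r A).E.filter (fun e => e.1 = pp) = {(pp, a)} := by
      show (N.G.E.filter _).filter _ = _
      rw [Multiset.filter_filter]
      refine Digraph'.filter_eq_singleton hpa ⟨rfl, hQppa⟩ (N.count_edge hpa) ?_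
      rintro e he ⟨h1, x, hx, p, hp, hep⟩
      have h2 := hout_pp e.2 (by
        rw [show e = (pp, e.2) from Prod.ext h1 rfl] at he; exact he)
      rcases h2 with h2 | h2
      · exact Prod.ext h1 h2
      · exfalso
        have hbp : e.2 ∈ p := (Digraph'.mem_of_zip_left hep).2
        rw [h2] at hbp
        exact hbnotin hp (hAX x hx).1 hbp
    have hcN' : ∀ e : α × α, N'.G.E.count e
        = (if (e.1 ≠ b ∧ e.2 ≠ b) ∧ (e.1 ≠ pp ∧ e.2 ≠ pp) then N.G.E.count e else 0)
          + (if e = (g, a) then 1 else 0) := by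
      intro e
      rw [hE'full, Multiset.count_add, Multiset.count_filter, Multiset.count_filter,
        Multiset.count_singleton]
      by_cases h1 : e.1 ≠ pp ∧ e.2 ≠ pp <;> by_cases h2 : e.1 ≠ b ∧ e.2 ≠ b <;>
        simp [h1, h2]
    have hVeq : (N'.G.pathGraph r A).V = (N.G.pathGraph r A).V.erase pp := by
      ext v
      simp only [Digraph'.pathGraph, Finset.mem_filter, Finset.mem_erase]
      constructor
      · rintro ⟨hvV', x, hx, p, hp, hvp⟩
        have hvfacts := hVsub v hvV'
        refine ⟨hvfacts.2.2, hvfacts.1, ?_⟩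
        by_cases hxa : x = a
        · obtain rfl : a = x := hxa.symm
          obtain ⟨q1, hpeq, hq1ne, hq1last, haq1, hpN⟩ := hC4 hp hra
          refine ⟨a, hx, _, hpN, ?_⟩
          rw [hpeq] at hvp
          rcases List.mem_append.1 hvp with h' | h'
          · simp [h']
          · simp at h'; simp [h']
        · exact ⟨x, hx, p, hT2' hp hxa, hvp⟩
      · rintro ⟨hvpp, hvV, x, hx, p, hp, hvp⟩
        by_cases hxa : x = a
        · obtain rfl : a = x := hxa.symm
          obtain ⟨q0, hpeq, hq0ne, hq0last, hppq0, haq0, hbq0, hp'⟩ := hC3 hp hra hrpp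
          have hvp' : v ∈ q0 ++ [a] := by
            rw [hpeq] at hvp
            rcases List.mem_append.1 hvp with h' | h'
            · simp [h']
            · simp at h'
              rcases h' with h' | h'
              · exact absurd h' hvpp
              · simp [h']
          exact ⟨hp'.1.2.1 v hvp', a, hx, _, hp', hvp'⟩
        · have hp' := hT1 hp hxa (hAX x hx).1 (hAX x hx).2
          exact ⟨hp'.1.2.1 v hvp, x, hx, p, hp', hvp⟩
    have hEeq : (N'.G.pathGraph r A).E
        = (N.G.pathGraph r A).E.filter (fun e => e.1 ≠ pp ∧ e.2 ≠ pp) + {(g, a)} := by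
      show N'.G.E.filter _ = (N.G.E.filter _).filter _ + _
      ext e
      simp only [Multiset.count_add, Multiset.count_filter, Multiset.count_singleton]
      by_cases hQ'e : ∃ x ∈ A, ∃ p, N'.G.PathFrom r x p ∧ e ∈ p.zip p.tail
      · rw [if_pos hQ'e]
        obtain ⟨x, hx, p, hp, hep⟩ := hQ'e
        have heE' : e ∈ N'.G.E := Digraph'.edge_of_mem_zip hp.1 hep
        by_cases hega : e = (g, a)
        · obtain rfl : e = (g, a) := hega
          have hc0 : N.G.E.count (g, a) = 0 := Multiset.count_eq_zero.2 hnga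
          rw [hcN' (g, a)]
          have hanpp : a ≠ pp := Ne.symm hppa
          simp [hc0, hga, hgb, hgppne, hab, hanpp]
        · have hfacts : e ∈ N.G.E ∧ e.1 ≠ b ∧ e.2 ≠ b ∧ e.1 ≠ pp ∧ e.2 ≠ pp := by
            rcases (hmemE' e).1 heE' with h' | h'
            · exact h'
            · exact absurd h' hega
          have hQe : ∃ x ∈ A, ∃ p, N.G.PathFrom r x p ∧ e ∈ p.zip p.tail := by
            by_cases hxa : x = a
            · obtain rfl : a = x := hxa.symm
              obtain ⟨q1, hpeq, hq1ne, hq1last, haq1, hpN⟩ := hC4 hp hra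
              refine ⟨a, hx, _, hpN, ?_⟩
              rw [hpeq] at hep
              rcases (Digraph'.mem_zip_append q1 [a] e).1 hep with h' | h' | h'
              · exact (Digraph'.mem_zip_append q1 [pp, a] e).2 (Or.inl h')
              · simp at h'
              · exfalso
                apply hega
                have he1 : e.1 = g := by
                  have hh := hq1last.symm.trans h'.1
                  exact (by simpa using hh : g = e.1).symm
                have he2 : e.2 = a := (by simpa using h'.2 : a = e.2).symm
                exact Prod.ext he1 he2
            · exact ⟨x, hx, p, hT2' hp hxa, hep⟩
          have hcnt : N'.G.E.count e = N.G.E.count e := by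
            rw [hcN' e, if_neg hega, if_pos ⟨⟨hfacts.2.1, hfacts.2.2.1⟩, hfacts.2.2.2⟩]
            omega
          rw [hcnt, if_pos hfacts.2.2.2, if_pos hQe, if_neg hega, add_zero]
      · rw [if_neg hQ'e]
        have hnotga : e ≠ (g, a) := by
          rintro rfl
          exact hQ'e hQ'ga
        have hnotQ : ¬ ((∃ x ∈ A, ∃ p, N.G.PathFrom r x p ∧ e ∈ p.zip p.tail) ∧
            (e.1 ≠ pp ∧ e.2 ≠ pp)) := by
          rintro ⟨⟨x, hx, p, hp, hep⟩, hinc⟩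
          apply hQ'e
          by_cases hxa : x = a
          · obtain rfl : a = x := hxa.symm
            obtain ⟨q0, hpeq, hq0ne, hq0last, hppq0, haq0, hbq0, hp'⟩ := hC3 hp hra hrpp
            refine ⟨a, hx, _, hp', ?_⟩
            rw [hpeq] at hep
            rcases (Digraph'.mem_zip_append q0 [pp, a] e).1 hep with h' | h' | h'
            · exact (Digraph'.mem_zip_append q0 [a] e).2 (Or.inl h')
            · exfalso
              have heppa : e = (pp, a) := by simpa [List.zip_cons_cons] using h'
              exact hinc.1 (congrArg Prod.fst heppa)
            · exfalso
              have h2 : e.2 = pp := (by simpa using h'.2 : pp = e.2).symm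
              exact hinc.2 h2
          · exact ⟨x, hx, p, hT1 hp hxa (hAX x hx).1 (hAX x hx).2, hep⟩
        rw [if_neg hnotga, add_zero]
        by_cases h1 : e.1 ≠ pp ∧ e.2 ≠ pp
        · rw [if_pos h1]
          by_cases h2 : ∃ x ∈ A, ∃ p, N.G.PathFrom r x p ∧ e ∈ p.zip p.tail
          · exact absurd ⟨h2, h1⟩ hnotQ
          · rw [if_neg h2]
        · rw [if_neg h1]
    have hsupPG : (N.G.pathGraph r A).Suppress pp (N'.G.pathGraph r A) := by
      refine ⟨?_, ?_, g, a, ?_, ?_, hVeq, ?_⟩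
      · simp only [Digraph'.inDeg, hPGin]; rfl
      · simp only [Digraph'.outDeg, hPGout]; rfl
      · have hm : (g, pp) ∈ (N.G.pathGraph r A).E.filter (fun e => e.2 = pp) := by
          rw [hPGin]; exact Multiset.mem_singleton_self _
        exact (Multiset.mem_filter.1 hm).1
      · have hm : (pp, a) ∈ (N.G.pathGraph r A).E.filter (fun e => e.1 = pp) := by
          rw [hPGout]; exact Multiset.mem_singleton_self _
        exact (Multiset.mem_filter.1 hm).1
      · simp only [Digraph'.deleteVertex]
        exact hEeq
    have hstep : Digraph'.SimpStep (N.G.pathGraph r A) (N'.G.pathGraph r A) :=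
      Or.inl ⟨pp, hsupPG⟩
    rw [Digraph'.fullSimp_unique_step hRankN hstep hfs hfs']
    exact Digraph'.isoOn_id _ _
  · -- a ∉ A : the path graphs coincide
    have hPG : N.G.pathGraph r A = N'.G.pathGraph r A := by
      refine Digraph'.ext' ?_ ?_
      · ext v
        simp only [Digraph'.pathGraph, Finset.mem_filter]
        constructor
        · rintro ⟨hvV, x, hx, p, hp, hvp⟩
          have hxa : x ≠ a := fun heq => hcase (heq ▸ hx)
          have hp' := hT1 hp hxa (hAX x hx).1 (hAX x hx).2
          exact ⟨hp'.1.2.1 v hvp, x, hx, p, hp', hvp⟩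
        · rintro ⟨hvV, x, hx, p, hp, hvp⟩
          have hxa : x ≠ a := fun heq => hcase (heq ▸ hx)
          have hp' := hT2' hp hxa
          exact ⟨hp'.1.2.1 v hvp, x, hx, p, hp', hvp⟩
      · show N.G.E.filter _ = N'.G.E.filter _
        ext e
        rw [Multiset.count_filter, Multiset.count_filter]
        by_cases hQ'e : ∃ x ∈ A, ∃ p, N'.G.PathFrom r x p ∧ e ∈ p.zip p.tail
        · rw [if_pos hQ'e]
          obtain ⟨x, hx, p, hp, hep⟩ := hQ'e
          have hxa : x ≠ a := fun heq => hcase (heq ▸ hx)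
          have hpN := hT2' hp hxa
          rw [if_pos ⟨x, hx, p, hpN, hep⟩]
          have heE' : e ∈ N'.G.E := Digraph'.edge_of_mem_zip hp.1 hep
          have heE : e ∈ N.G.E := Digraph'.edge_of_mem_zip hpN.1 hep
          rw [N.count_edge heE, N'.count_edge heE']
        · rw [if_neg hQ'e]
          by_cases hQe : ∃ x ∈ A, ∃ p, N.G.PathFrom r x p ∧ e ∈ p.zip p.tail
          · exfalso
            obtain ⟨x, hx, p, hp, hep⟩ := hQe
            have hxa : x ≠ a := fun heq => hcase (heq ▸ hx)
            exact hQ'e ⟨x, hx, p, hT1 hp hxa (hAX x hx).1 (hAX x hx).2, hep⟩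
          · rw [if_neg hQe]
    rw [hPG] at hfs
    rw [Digraph'.fullSimp_unique hRankN' hfs hfs']
    exact Digraph'.isoOn_id _ _
end

section
/- Let N be a rooted binary phylogenetic network on X, let (a, b) be a reticulated cherry of N, and let N' be obtained from N by cutting (a, b). If A ⊆ X with b ∉ A, then the network exhibited by N on A equals the network exhibited by N' on A. -/
open scoped Classical

set_option linter.unusedSectionVars false
section Aux

open List Multiset Relation

namespace Digraph'

variable {α : Type*} [DecidableEq α]

/-- consecutive pairs of a list -/
def pairs (l : List α) : List (α × α) := l.zip l.tail

@[simp] lemma pairs_nil : pairs ([] : List α) = [] := rfl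
@[simp] lemma pairs_single (a : α) : pairs [a] = [] := rfl
@[simp] lemma pairs_cons_cons (a b : α) (t : List α) :
    pairs (a :: b :: t) = (a, b) :: pairs (b :: t) := rfl

lemma mem_of_mem_pairs {l : List α} {e : α × α} (h : e ∈ pairs l) :
    e.1 ∈ l ∧ e.2 ∈ l := by
  induction l with
  | nil => simp [pairs] at h
  | cons a t ih =>
    cases t with
    | nil => simp [pairs] at h
    | cons b t' =>
      rw [pairs_cons_cons, List.mem_cons] at h
      rcases h with h | h
      · subst h; simp
      · have := ih h; exact ⟨by simp [this.1], by simp [this.2]⟩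

lemma chain'_iff_pairs {R : α → α → Prop} {l : List α} :
    l.Chain' R ↔ ∀ e ∈ pairs l, R e.1 e.2 := by
  induction l with
  | nil => simp [List.Chain']
  | cons a t ih =>
    cases t with
    | nil => simp [List.Chain']
    | cons b t' =>
      rw [show (a :: b :: t').Chain' R ↔ R a b ∧ (b :: t').Chain' R from List.isChain_cons_cons, pairs_cons_cons]
      simp only [List.mem_cons]
      constructor
      · rintro ⟨h1, h2⟩ e (rfl | he)
        · exact h1
        · exact (ih.mp h2) e he
      · intro h
        exact ⟨h (a, b) (Or.inl rfl), ih.mpr fun e he => h e (Or.inr he)⟩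

lemma pairs_concat_concat (l : List α) (z y : α) :
    pairs (l ++ [z, y]) = pairs (l ++ [z]) ++ [(z, y)] := by
  induction l with
  | nil => rfl
  | cons a t ih =>
    cases t with
    | nil => rfl
    | cons b t' =>
      simpa using ih

variable {G : Digraph' α} {u v w x y z r : α} {p q : List α}

lemma PathFrom.ne_nil (h : G.PathFrom u v p) : p ≠ [] := h.1.1

lemma PathFrom.mem_V (h : G.PathFrom u v p) : ∀ z ∈ p, z ∈ G.V := h.1.2.1

lemma PathFrom.pairs_mem (h : G.PathFrom u v p) : ∀ e ∈ pairs p, e ∈ G.E :=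
  chain'_iff_pairs.mp h.1.2.2

lemma PathFrom.start_mem (h : G.PathFrom u v p) : u ∈ p := by
  have := h.2.1
  exact List.mem_of_mem_head? this

lemma PathFrom.end_mem (h : G.PathFrom u v p) : v ∈ p := by
  have := h.2.2
  exact List.mem_of_mem_getLast? this

lemma pathFrom_single (hu : u ∈ G.V) : G.PathFrom u u [u] := by
  refine ⟨⟨by simp, by simpa using hu, by simp [List.Chain']⟩, by simp, by simp⟩

lemma pathFrom_of_pairs (hne : p ≠ []) (hV : ∀ z ∈ p, z ∈ G.V)
    (hE : ∀ e ∈ pairs p, e ∈ G.E) (hh : p.head? = some u) (hl : p.getLast? = some v) :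
    G.PathFrom u v p :=
  ⟨⟨hne, hV, chain'_iff_pairs.mpr hE⟩, hh, hl⟩

lemma PathFrom.snoc (h : G.PathFrom u v p) (he : (v, w) ∈ G.E) (hw : w ∈ G.V) :
    G.PathFrom u w (p ++ [w]) := by
  obtain ⟨⟨hne, hV, hc⟩, hh, hl⟩ := h
  refine ⟨⟨by simp, ?_, ?_⟩, ?_, by simp⟩
  · intro z hz
    rcases List.mem_append.mp hz with hz | hz
    · exact hV z hz
    · simp at hz; subst hz; exact hw
  · show List.IsChain _ _
    rw [List.isChain_append]
    refine ⟨hc, by simp, ?_⟩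
    intro a ha b hb
    simp at hb; subst hb
    rw [hl] at ha; simp at ha; subst ha; exact he
  · rw [List.head?_append_of_ne_nil _ hne]; exact hh

/-- step relation of a digraph -/
def Step (G : Digraph' α) (u v : α) : Prop := (u, v) ∈ G.E

def Wf (G : Digraph' α) : Prop := ∀ e ∈ G.E, e.1 ∈ G.V ∧ e.2 ∈ G.V

def Good (G : Digraph' α) : Prop := G.Wf ∧ G.Acyclic

lemma reaches_iff (hwf : G.Wf) :
    G.Reaches u v ↔ u ∈ G.V ∧ Relation.ReflTransGen G.Step u v := by
  constructor
  · rintro ⟨p, hp⟩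
    induction p generalizing u with
    | nil => exact absurd rfl hp.ne_nil
    | cons a t ih =>
      have hau : a = u := by have := hp.2.1; simpa using this
      subst hau
      have haV : a ∈ G.V := hp.mem_V a (by simp)
      cases t with
      | nil =>
        have : a = v := by have := hp.2.2; simpa using this
        subst this; exact ⟨haV, Relation.ReflTransGen.refl⟩
      | cons b t' =>
        have hstep : (a, b) ∈ G.E := hp.pairs_mem (a, b) (by simp)
        have hp' : G.PathFrom b v (b :: t') := by
          refine ⟨⟨by simp, ?_, ?_⟩, by simp, ?_⟩
          · intro z hz; exact hp.mem_V z (by simp [hz])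
          · exact (List.isChain_cons_cons.mp hp.1.2.2).2
          · have := hp.2.2; simpa using this
        obtain ⟨_, hr⟩ := ih hp'
        exact ⟨haV, Relation.ReflTransGen.head hstep hr⟩
  · rintro ⟨hu, hr⟩
    induction hr with
    | refl => exact ⟨[u], pathFrom_single hu⟩
    | tail _ hstep ih =>
      obtain ⟨p, hp⟩ := ih
      rename_i b c _
      exact ⟨p ++ [c], hp.snoc hstep (hwf _ hstep).2⟩

lemma reaches_mono {G' : Digraph' α} (hV : ∀ v ∈ G.V, v ∈ G'.V)
    (hE : ∀ e ∈ G.E, e ∈ G'.E) (h : G.Reaches u v) : G'.Reaches u v := by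
  obtain ⟨p, hp⟩ := h
  exact ⟨p, ⟨⟨hp.ne_nil, fun z hz => hV z (hp.mem_V z hz),
    chain'_iff_pairs.mpr fun e he => hE e (hp.pairs_mem e he)⟩, hp.2.1, hp.2.2⟩⟩

lemma no_self_loop (hG : G.Good) : (v, v) ∉ G.E := by
  intro h
  exact hG.2 (v, v) h ⟨[v], pathFrom_single (hG.1 _ h).1⟩

lemma PathFrom.decomp_prefix {s t : List α} (h : G.PathFrom u v (s ++ w :: t)) :
    G.PathFrom u w (s ++ [w]) := by
  refine ⟨⟨by simp, ?_, ?_⟩, ?_, by simp⟩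
  · intro z hz; exact h.mem_V z (by simp at hz ⊢; tauto)
  · exact h.1.2.2.prefix ⟨t, by rw [List.append_assoc]; rfl⟩
  · have h1 := h.2.1
    rw [show s ++ w :: t = (s ++ [w]) ++ t from by rw [List.append_assoc]; rfl,
      List.head?_append_of_ne_nil _ (by simp)] at h1
    exact h1

lemma PathFrom.decomp_suffix {s t : List α} (h : G.PathFrom u v (s ++ w :: t)) :
    G.PathFrom w v (w :: t) := by
  refine ⟨⟨by simp, ?_, ?_⟩, by simp, ?_⟩
  · intro z hz; exact h.mem_V z (by simp at hz ⊢; tauto)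
  · exact h.1.2.2.suffix ⟨s, rfl⟩
  · have h1 := h.2.2
    rwa [List.getLast?_append_of_ne_nil _ (by simp)] at h1

lemma PathFrom.concat_cases (h : G.PathFrom u v p) :
    (p = [u] ∧ u = v) ∨
    ∃ q y, p = q ++ [y, v] ∧ G.PathFrom u y (q ++ [y]) ∧ (y, v) ∈ G.E := by
  rcases List.eq_nil_or_concat p with rfl | ⟨L, z, hp⟩
  · exact absurd rfl h.ne_nil
  rw [List.concat_eq_append] at hp
  subst hp
  have hz : v = z := by
    have h1 := h.2.2; rw [List.getLast?_concat] at h1; simpa using h1.symm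
  subst hz
  rcases List.eq_nil_or_concat L with rfl | ⟨L2, y, hL⟩
  · left
    have h1 : u = v := by have h1 := h.2.1; simpa using h1.symm
    exact ⟨by simp [h1], h1⟩
  rw [List.concat_eq_append] at hL
  subst hL
  right
  refine ⟨L2, y, by simp, ?_, ?_⟩
  · rw [show L2 ++ [y] ++ [v] = L2 ++ (y :: [v]) from by simp] at h
    exact h.decomp_prefix
  · have hc := h.1.2.2
    rw [show L2 ++ [y] ++ [v] = L2 ++ [y, v] from by simp, chain'_iff_pairs] at hc
    exact hc (y, v) (by rw [pairs_concat_concat]; simp)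

lemma PathFrom.suffix_of_mem (h : G.PathFrom u v p) (hr : r ∈ p) :
    ∃ q, G.PathFrom r v q ∧ ∀ z ∈ q, z ∈ p := by
  obtain ⟨s, t, rfl⟩ := List.append_of_mem hr
  exact ⟨r :: t, h.decomp_suffix, fun z hz => by simp at hz ⊢; tauto⟩

lemma PathFrom.prefix_of_mem (h : G.PathFrom u v p) (hr : r ∈ p) :
    ∃ q, G.PathFrom u r q ∧ ∀ z ∈ q, z ∈ p := by
  obtain ⟨s, t, rfl⟩ := List.append_of_mem hr
  exact ⟨s ++ [r], h.decomp_prefix, fun z hz => by simp at hz ⊢; tauto⟩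

lemma reaches_or_of_mem (h : G.PathFrom u v p) (hw : w ∈ p) (hx : x ∈ p) :
    G.Reaches w x ∨ G.Reaches x w := by
  obtain ⟨s, t, rfl⟩ := List.append_of_mem hw
  rcases List.mem_append.mp hx with hxs | hxt
  · have hpre := h.decomp_prefix (w := w)
    obtain ⟨q, hq, _⟩ := hpre.suffix_of_mem (r := x) (by simp [hxs])
    exact Or.inr ⟨q, hq⟩
  · have hsuf := h.decomp_suffix (w := w)
    obtain ⟨q, hq, _⟩ := hsuf.prefix_of_mem (r := x) hxt
    exact Or.inl ⟨q, hq⟩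

lemma succ_of_mem (h : G.PathFrom u v p) (hw : w ∈ p) :
    w = v ∨ ∃ z, (w, z) ∈ G.E ∧ z ∈ p := by
  obtain ⟨s, t, rfl⟩ := List.append_of_mem hw
  cases t with
  | nil =>
    left
    have := h.2.2
    rw [show s ++ [w] = s ++ [w] from rfl, List.getLast?_append_of_ne_nil _ (by simp)] at this
    simpa using this
  | cons z t' =>
    right
    refine ⟨z, ?_, by simp⟩
    have hc := h.1.2.2.suffix (⟨s, rfl⟩ : (w :: z :: t') <:+ _)
    exact (List.isChain_cons_cons.mp hc).1

lemma eq_single_of_no_out (h : G.PathFrom u v p) (h0 : G.outDeg u = 0) :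
    p = [u] ∧ v = u := by
  have hh := h.2.1
  cases p with
  | nil => exact absurd rfl h.ne_nil
  | cons a t =>
    have hh2 : u = a := by simpa using hh.symm
    subst hh2
    cases t with
    | nil => exact ⟨rfl, by have := h.2.2; simpa using this.symm⟩
    | cons b t' =>
      exfalso
      have he : (u, b) ∈ G.E := h.pairs_mem (u, b) (by simp)
      have : (u, b) ∈ G.E.filter (fun e => e.1 = u) := Multiset.mem_filter.mpr ⟨he, rfl⟩
      have hc := Multiset.card_pos_iff_exists_mem.mpr ⟨_, this⟩
      rw [outDeg] at h0; omega

end Digraph'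
end Aux
section SecB
open List Multiset Relation
namespace Digraph'
variable {α : Type*} [DecidableEq α] {G G' G1 G2 B C : Digraph' α} {u v w x y z p c : α}

lemma ext'_s15 {G H : Digraph' α} (hV : G.V = H.V) (hE : G.E = H.E) : G = H := by
  cases G; cases H; simp_all

lemma eq_singleton_of {β : Type*} [DecidableEq β] {s : Multiset β} {c : β}
    (h1 : ∀ x ∈ s, x = c) (h2 : c ∈ s) (h3 : s.count c ≤ 1) : s = {c} := by
  ext x
  by_cases hx : x = c
  · subst hx
    have h4 := Multiset.one_le_count_iff_mem.mpr h2
    have h5 := le_antisymm h3 h4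
    simp [h5]
  · rw [Multiset.count_eq_zero.mpr (fun hm => hx (h1 x hm))]
    simp [hx]

lemma inDeg_filter (h : G.inDeg w = 1) (he : (x, w) ∈ G.E) :
    G.E.filter (fun e => e.2 = w) = {(x, w)} := by
  obtain ⟨cc, hcc⟩ := Multiset.card_eq_one.mp h
  have hx : (x, w) ∈ G.E.filter (fun e => e.2 = w) := Multiset.mem_filter.mpr ⟨he, rfl⟩
  rw [hcc] at hx ⊢
  simp at hx; rw [hx]

lemma inDeg_unique (h : G.inDeg w = 1) (he : (x, w) ∈ G.E) :
    ∀ y, (y, w) ∈ G.E → y = x := by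
  intro y hy
  have h2 : (y, w) ∈ G.E.filter (fun e => e.2 = w) := Multiset.mem_filter.mpr ⟨hy, rfl⟩
  rw [inDeg_filter h he] at h2
  simp at h2; exact h2

lemma inDeg_count (h : G.inDeg w = 1) (he : (x, w) ∈ G.E) : G.E.count (x, w) = 1 := by
  have := inDeg_filter h he
  have h2 : Multiset.count (x, w) (G.E.filter (fun e => e.2 = w)) = 1 := by
    rw [this]; simp
  rwa [Multiset.count_filter, if_pos rfl] at h2

lemma outDeg_filter (h : G.outDeg w = 1) (he : (w, x) ∈ G.E) :
    G.E.filter (fun e => e.1 = w) = {(w, x)} := by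
  obtain ⟨cc, hcc⟩ := Multiset.card_eq_one.mp h
  have hx : (w, x) ∈ G.E.filter (fun e => e.1 = w) := Multiset.mem_filter.mpr ⟨he, rfl⟩
  rw [hcc] at hx ⊢
  simp at hx; rw [hx]

lemma outDeg_unique (h : G.outDeg w = 1) (he : (w, x) ∈ G.E) :
    ∀ y, (w, y) ∈ G.E → y = x := by
  intro y hy
  have h2 : (w, y) ∈ G.E.filter (fun e => e.1 = w) := Multiset.mem_filter.mpr ⟨hy, rfl⟩
  rw [outDeg_filter h he] at h2
  simp at h2; exact h2

lemma outDeg_count (h : G.outDeg w = 1) (he : (w, x) ∈ G.E) : G.E.count (w, x) = 1 := by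
  have := outDeg_filter h he
  have h2 : Multiset.count (w, x) (G.E.filter (fun e => e.1 = w)) = 1 := by
    rw [this]; simp
  rwa [Multiset.count_filter, if_pos rfl] at h2

lemma not_mem_of_outDeg_zero (h : G.outDeg w = 0) : (w, z) ∉ G.E := by
  intro hm
  have h2 : (w, z) ∈ G.E.filter (fun e => e.1 = w) := Multiset.mem_filter.mpr ⟨hm, rfl⟩
  have := Multiset.card_pos_iff_exists_mem.mpr ⟨_, h2⟩
  rw [outDeg] at h; omega

lemma out_pair (h : G.outDeg w = 2) (h1 : (w, x) ∈ G.E) (h2 : (w, y) ∈ G.E)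
    (hxy : x ≠ y) : ∀ z, (w, z) ∈ G.E → z = x ∨ z = y := by
  intro z hz
  have hle : ((w, x) ::ₘ {(w, y)} : Multiset (α × α)) ≤ G.E.filter (fun e => e.1 = w) := by
    rw [Multiset.le_iff_count]
    intro e
    by_cases hex : e = (w, x)
    · subst hex
      rw [Multiset.count_cons_self]
      have hm : (w, x) ∈ G.E.filter (fun e => e.1 = w) := Multiset.mem_filter.mpr ⟨h1, rfl⟩
      have h5 := Multiset.one_le_count_iff_mem.mpr hm
      have h6 : Multiset.count (w, x) ({(w, y)} : Multiset (α × α)) = 0 := by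
        simp [Prod.ext_iff, hxy]
      omega
    · rw [Multiset.count_cons_of_ne hex]
      by_cases hey : e = (w, y)
      · subst hey
        have hm : (w, y) ∈ G.E.filter (fun e => e.1 = w) := Multiset.mem_filter.mpr ⟨h2, rfl⟩
        have h5 := Multiset.one_le_count_iff_mem.mpr hm
        simpa using h5
      · rw [Multiset.count_singleton, if_neg hey]
        omega
  have hcard : Multiset.card (G.E.filter (fun e => e.1 = w)) ≤
      Multiset.card ((w, x) ::ₘ {(w, y)} : Multiset (α × α)) := by
    have h7 : Multiset.card (G.E.filter (fun e => e.1 = w)) = 2 := h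
    rw [h7]; simp
  have hfeq := Multiset.eq_of_le_of_card_le hle hcard
  have hzf : (w, z) ∈ G.E.filter (fun e => e.1 = w) := Multiset.mem_filter.mpr ⟨hz, rfl⟩
  rw [← hfeq] at hzf
  simp [Prod.ext_iff] at hzf
  tauto

lemma card_filter_erase' {β : Type*} [DecidableEq β] (s : Multiset β) {e : β} (he : e ∈ s)
    (p : β → Prop) [DecidablePred p] :
    (Multiset.filter p s).card = ((s.erase e).filter p).card + if p e then 1 else 0 := by
  conv_lhs => rw [← Multiset.cons_erase he]
  rw [Multiset.filter_cons, Multiset.card_add]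
  split_ifs <;> simp [add_comm]

lemma Suppress.exists_data (h : G.Suppress w G') :
    ∃ p c, (p, w) ∈ G.E ∧ (w, c) ∈ G.E ∧ G'.V = G.V.erase w ∧
      G'.E = G.E.filter (fun e => e.1 ≠ w ∧ e.2 ≠ w) + {(p, c)} ∧
      G.inDeg w = 1 ∧ G.outDeg w = 1 := by
  obtain ⟨h1, h2, p, c, hp, hc, hV, hE⟩ := h
  exact ⟨p, c, hp, hc, hV, hE, h1, h2⟩

lemma Suppress.wf (hG : G.Good) (h : G.Suppress w G') : G'.Wf := by
  obtain ⟨p, c, hpw, hwc, hV, hE, _, _⟩ := h.exists_data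
  intro e he
  rw [hE] at he
  rw [hV]
  rcases Multiset.mem_add.mp he with he | he
  · obtain ⟨heE, h1, h2⟩ := Multiset.mem_filter.mp he
    obtain ⟨hv1, hv2⟩ := hG.1 e heE
    exact ⟨Finset.mem_erase.mpr ⟨h1, hv1⟩, Finset.mem_erase.mpr ⟨h2, hv2⟩⟩
  · simp at he; subst he
    have hp : p ≠ w := fun hh => no_self_loop hG (hh ▸ hpw)
    have hc : c ≠ w := fun hh => no_self_loop hG (hh ▸ hwc)
    exact ⟨Finset.mem_erase.mpr ⟨hp, (hG.1 _ hpw).1⟩, Finset.mem_erase.mpr ⟨hc, (hG.1 _ hwc).2⟩⟩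

lemma Suppress.reaches_transfer (hG : G.Good) (h : G.Suppress w G')
    (hr : G'.Reaches u v) : G.Reaches u v := by
  obtain ⟨p, c, hpw, hwc, hV, hE, _, _⟩ := h.exists_data
  have hwf' : G'.Wf := h.wf hG
  rw [reaches_iff hwf'] at hr
  rw [reaches_iff hG.1]
  obtain ⟨huV, hrtg⟩ := hr
  refine ⟨by rw [hV] at huV; exact Finset.mem_of_mem_erase huV, ?_⟩
  induction hrtg with
  | refl => exact Relation.ReflTransGen.refl
  | @tail b1 c1 _ hbc ih =>
    have hbc' : (b1, c1) ∈ G'.E := hbc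
    rw [hE] at hbc'
    rcases Multiset.mem_add.mp hbc' with hm | hm
    · exact ih.tail (Multiset.mem_filter.mp hm).1
    · simp at hm
      obtain ⟨rfl, rfl⟩ := hm
      exact (ih.tail hpw).tail hwc

lemma Suppress.good (hG : G.Good) (h : G.Suppress w G') : G'.Good := by
  refine ⟨h.wf hG, ?_⟩
  obtain ⟨p, c, hpw, hwc, hV, hE, _, _⟩ := h.exists_data
  intro e he hre
  have hre' := h.reaches_transfer hG hre
  rw [hE] at he
  rcases Multiset.mem_add.mp he with hm | hm
  · exact hG.2 e (Multiset.mem_filter.mp hm).1 hre'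
  · simp at hm; subst hm
    simp only at hre'
    refine hG.2 (p, w) hpw ?_
    rw [reaches_iff hG.1]
    refine ⟨(hG.1 _ hpw).2, ?_⟩
    exact Relation.ReflTransGen.head hwc (reaches_iff hG.1 |>.mp hre').2

lemma DeleteParallel.good (hG : G.Good) (h : G.DeleteParallel G') : G'.Good := by
  obtain ⟨e, hcnt, hV, hE⟩ := h
  constructor
  · intro e' he'
    rw [hE] at he'
    rw [hV]
    exact hG.1 e' (Multiset.mem_of_mem_erase he')
  · intro e' he' hre
    rw [hE] at he'
    refine hG.2 e' (Multiset.mem_of_mem_erase he') ?_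
    refine reaches_mono (fun v hv => ?_) (fun f hf => ?_) hre
    · rwa [hV] at hv
    · rw [hE] at hf; exact Multiset.mem_of_mem_erase hf

lemma SimpStep.good (hG : G.Good) (h : SimpStep G G') : G'.Good := by
  rcases h with ⟨w, hs⟩ | hd
  · exact hs.good hG
  · exact hd.good hG

end Digraph'
end SecB
section SecC
open List Multiset Relation
namespace Digraph'
variable {α : Type*} [DecidableEq α] {G G1 G2 B C H1 H2 : Digraph' α} {u v w x y z w1 w2 : α}

lemma filter_comm' (s : Multiset (α × α)) (P Q : α × α → Prop)
    [DecidablePred P] [DecidablePred Q] :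
    (s.filter P).filter Q = (s.filter Q).filter P := by
  rw [Multiset.filter_filter, Multiset.filter_filter]
  exact Multiset.filter_congr fun x _ => and_comm

lemma suppress_of {G G' : Digraph' α} {w p c : α} (hin : G.inDeg w = 1) (hout : G.outDeg w = 1)
    (hp : (p, w) ∈ G.E) (hc : (w, c) ∈ G.E) (hV : G'.V = G.V.erase w)
    (hE : G'.E = G.E.filter (fun e => e.1 ≠ w ∧ e.2 ≠ w) + {(p, c)}) : G.Suppress w G' :=
  ⟨hin, hout, p, c, hp, hc, hV, hE⟩

lemma Suppress.unique (h1 : G.Suppress w G1) (h2 : G.Suppress w G2) : G1 = G2 := by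
  obtain ⟨p1, c1, hp1, hc1, hV1, hE1, hin, hout⟩ := h1.exists_data
  obtain ⟨p2, c2, hp2, hc2, hV2, hE2, _, _⟩ := h2.exists_data
  have hp : p2 = p1 := inDeg_unique hin hp1 p2 hp2
  have hc : c2 = c1 := outDeg_unique hout hc1 c2 hc2
  refine ext'_s15 (by rw [hV1, hV2]) (by rw [hE1, hE2, hp, hc])

lemma two_path (hG : G.Good) (he : (x, y) ∈ G.E) : G.Reaches x y :=
  ⟨[x, y], (pathFrom_single (hG.1 _ he).1).snoc he (hG.1 _ he).2⟩

lemma SS_adj (hG : G.Good) (hs1 : G.Suppress w1 G1) (hs2 : G.Suppress w2 G2)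
    (hne : w1 ≠ w2) (hadj : (w1, w2) ∈ G.E) :
    ∃ D, G1.Suppress w2 D ∧ G2.Suppress w1 D := by
  obtain ⟨p1, c1, hp1, hc1, hV1, hE1, hin1, hout1⟩ := hs1.exists_data
  obtain ⟨p2, c2, hp2, hc2, hV2, hE2, hin2, hout2⟩ := hs2.exists_data
  have hc1w2 : w2 = c1 := outDeg_unique hout1 hc1 w2 hadj
  have hp2w1 : w1 = p2 := inDeg_unique hin2 hp2 w1 hadj
  subst hc1w2; subst hp2w1
  have h21 : (w2, w1) ∉ G.E := fun hh => hG.2 (w1, w2) hadj (two_path hG hh)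
  have np1w1 : p1 ≠ w1 := fun hh => no_self_loop hG (hh ▸ hp1)
  have nc2w2 : c2 ≠ w2 := fun hh => no_self_loop hG (hh ▸ hc2)
  have np1w2 : p1 ≠ w2 := fun hh => h21 (hh ▸ hp1)
  have nc2w1 : c2 ≠ w1 := fun hh => h21 (hh ▸ hc2)
  have huin1 := inDeg_unique hin1 hp1
  have huout1 := outDeg_unique hout1 hadj
  have huin2 := inDeg_unique hin2 hadj
  have huout2 := outDeg_unique hout2 hc2
  refine ⟨⟨(G.V.erase w1).erase w2,
    (G.E.filter (fun e => e.1 ≠ w1 ∧ e.2 ≠ w1)).filter (fun e => e.1 ≠ w2 ∧ e.2 ≠ w2)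
      + {(p1, c2)}⟩, ?_, ?_⟩
  · -- Suppress G1 w2
    refine suppress_of ?_ ?_ (p := p1) (c := c2) ?_ ?_ (by rw [hV1]) ?_
    · rw [inDeg, hE1, Multiset.filter_add, Multiset.card_add]
      have hz : (G.E.filter (fun e => e.1 ≠ w1 ∧ e.2 ≠ w1)).filter (fun e => e.2 = w2) = 0 := by
        rw [Multiset.filter_filter, Multiset.filter_eq_nil]
        rintro ⟨ea, eb⟩ hm ⟨heb, hea, _⟩
        exact hea (huin2 ea (by rwa [show eb = w2 from heb] at hm))
      rw [hz, Multiset.filter_singleton, if_pos (by simp)]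
      simp
    · rw [outDeg, hE1, Multiset.filter_add, Multiset.card_add]
      have hz : (G.E.filter (fun e => e.1 ≠ w1 ∧ e.2 ≠ w1)).filter (fun e => e.1 = w2)
          = G.E.filter (fun e => e.1 = w2) := by
        rw [Multiset.filter_filter]
        refine Multiset.filter_congr ?_
        rintro ⟨ea, eb⟩ hm
        constructor
        · exact fun hh => hh.1
        · intro hh
          have heb : eb = c2 := huout2 eb (by rwa [show ea = w2 from hh] at hm)
          exact ⟨hh, by rw [hh]; exact hne.symm, by rw [heb]; exact nc2w1⟩
      rw [hz]
      have h0 : ({(p1, w2)} : Multiset (α × α)).filter (fun e => e.1 = w2) = 0 := by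
        rw [Multiset.filter_singleton, if_neg (by simp [np1w2])]; rfl
      rw [h0]
      simpa [outDeg] using hout2
    · rw [hE1]; exact Multiset.mem_add.mpr (Or.inr (by simp))
    · rw [hE1]
      exact Multiset.mem_add.mpr (Or.inl (Multiset.mem_filter.mpr ⟨hc2, hne.symm, nc2w1⟩))
    · rw [hE1, Multiset.filter_add, Multiset.filter_singleton, if_neg (by simp)]
      simp
  · -- Suppress G2 w1
    refine suppress_of ?_ ?_ (p := p1) (c := c2) ?_ ?_
      (by rw [hV2, Finset.erase_right_comm]) ?_
    · rw [inDeg, hE2, Multiset.filter_add, Multiset.card_add]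
      have hz : (G.E.filter (fun e => e.1 ≠ w2 ∧ e.2 ≠ w2)).filter (fun e => e.2 = w1)
          = G.E.filter (fun e => e.2 = w1) := by
        rw [Multiset.filter_filter]
        refine Multiset.filter_congr ?_
        rintro ⟨ea, eb⟩ hm
        constructor
        · exact fun hh => hh.1
        · intro hh
          have hea : ea = p1 := huin1 ea (by rwa [show eb = w1 from hh] at hm)
          exact ⟨hh, by rw [hea]; exact np1w2, by rw [hh]; exact hne⟩
      rw [hz]
      have h0 : ({(w1, c2)} : Multiset (α × α)).filter (fun e => e.2 = w1) = 0 := by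
        rw [Multiset.filter_singleton, if_neg (by simp [nc2w1])]; rfl
      rw [h0]
      simpa [inDeg] using hin1
    · rw [outDeg, hE2, Multiset.filter_add, Multiset.card_add]
      have hz : (G.E.filter (fun e => e.1 ≠ w2 ∧ e.2 ≠ w2)).filter (fun e => e.1 = w1) = 0 := by
        rw [Multiset.filter_filter, Multiset.filter_eq_nil]
        rintro ⟨ea, eb⟩ hm ⟨hea, _, heb⟩
        exact heb (huout1 eb (by rwa [show ea = w1 from hea] at hm))
      rw [hz, Multiset.filter_singleton, if_pos (by simp)]
      simp
    · rw [hE2]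
      exact Multiset.mem_add.mpr (Or.inl (Multiset.mem_filter.mpr ⟨hp1, np1w2, hne⟩))
    · rw [hE2]; exact Multiset.mem_add.mpr (Or.inr (by simp))
    · rw [hE2, Multiset.filter_add, Multiset.filter_singleton, if_neg (by simp)]
      rw [filter_comm']
      simp

lemma SS_nonadj (hG : G.Good) (hs1 : G.Suppress w1 G1) (hs2 : G.Suppress w2 G2)
    (hne : w1 ≠ w2) (h12 : (w1, w2) ∉ G.E) (h21 : (w2, w1) ∉ G.E) :
    ∃ D, G1.Suppress w2 D ∧ G2.Suppress w1 D := by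
  obtain ⟨p1, c1, hp1, hc1, hV1, hE1, hin1, hout1⟩ := hs1.exists_data
  obtain ⟨p2, c2, hp2, hc2, hV2, hE2, hin2, hout2⟩ := hs2.exists_data
  have np1 : p1 ≠ w2 := fun hh => h21 (hh ▸ hp1)
  have nc1 : c1 ≠ w2 := fun hh => h12 (hh ▸ hc1)
  have np2 : p2 ≠ w1 := fun hh => h12 (hh ▸ hp2)
  have nc2 : c2 ≠ w1 := fun hh => h21 (hh ▸ hc2)
  have key1 : ∀ Q : α × α → Prop, ∀ _ : DecidablePred Q, (∀ ea eb, Q (ea, eb) → eb = w2 ∨ ea = w2) →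
      True := fun _ _ _ => trivial
  have hfin : (G.E.filter (fun e => e.1 ≠ w1 ∧ e.2 ≠ w1)).filter (fun e => e.2 = w2)
      = G.E.filter (fun e => e.2 = w2) := by
    rw [Multiset.filter_filter]
    refine Multiset.filter_congr ?_
    rintro ⟨ea, eb⟩ hm
    constructor
    · exact fun hh => hh.1
    · intro hh
      refine ⟨hh, fun hea => ?_, by rw [hh]; exact hne.symm⟩
      rw [show ea = w1 from hea, show eb = w2 from hh] at hm; exact h12 hm
  have hfout : (G.E.filter (fun e => e.1 ≠ w1 ∧ e.2 ≠ w1)).filter (fun e => e.1 = w2)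
      = G.E.filter (fun e => e.1 = w2) := by
    rw [Multiset.filter_filter]
    refine Multiset.filter_congr ?_
    rintro ⟨ea, eb⟩ hm
    constructor
    · exact fun hh => hh.1
    · intro hh
      refine ⟨hh, by rw [hh]; exact hne.symm, fun heb => ?_⟩
      rw [show ea = w2 from hh, show eb = w1 from heb] at hm; exact h21 hm
  have hfin2 : (G.E.filter (fun e => e.1 ≠ w2 ∧ e.2 ≠ w2)).filter (fun e => e.2 = w1)
      = G.E.filter (fun e => e.2 = w1) := by
    rw [Multiset.filter_filter]
    refine Multiset.filter_congr ?_
    rintro ⟨ea, eb⟩ hm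
    constructor
    · exact fun hh => hh.1
    · intro hh
      refine ⟨hh, fun hea => ?_, by rw [hh]; exact hne⟩
      rw [show ea = w2 from hea, show eb = w1 from hh] at hm; exact h21 hm
  have hfout2 : (G.E.filter (fun e => e.1 ≠ w2 ∧ e.2 ≠ w2)).filter (fun e => e.1 = w1)
      = G.E.filter (fun e => e.1 = w1) := by
    rw [Multiset.filter_filter]
    refine Multiset.filter_congr ?_
    rintro ⟨ea, eb⟩ hm
    constructor
    · exact fun hh => hh.1
    · intro hh
      refine ⟨hh, by rw [hh]; exact hne, fun heb => ?_⟩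
      rw [show ea = w1 from hh, show eb = w2 from heb] at hm; exact h12 hm
  refine ⟨⟨(G.V.erase w1).erase w2,
    (G.E.filter (fun e => e.1 ≠ w1 ∧ e.2 ≠ w1)).filter (fun e => e.1 ≠ w2 ∧ e.2 ≠ w2)
      + {(p1, c1)} + {(p2, c2)}⟩, ?_, ?_⟩
  · refine suppress_of ?_ ?_ (p := p2) (c := c2) ?_ ?_ (by rw [hV1]) ?_
    · rw [inDeg, hE1, Multiset.filter_add, Multiset.card_add, hfin,
        Multiset.filter_singleton, if_neg (by simp [nc1])]
      simpa [inDeg] using hin2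
    · rw [outDeg, hE1, Multiset.filter_add, Multiset.card_add, hfout,
        Multiset.filter_singleton, if_neg (by simp [np1])]
      simpa [outDeg] using hout2
    · rw [hE1]
      exact Multiset.mem_add.mpr (Or.inl (Multiset.mem_filter.mpr ⟨hp2, np2, hne.symm⟩))
    · rw [hE1]
      exact Multiset.mem_add.mpr (Or.inl (Multiset.mem_filter.mpr ⟨hc2, hne.symm, nc2⟩))
    · rw [hE1, Multiset.filter_add, Multiset.filter_singleton, if_pos (by simp [np1, nc1])]
  · refine suppress_of ?_ ?_ (p := p1) (c := c1) ?_ ?_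
      (by rw [hV2, Finset.erase_right_comm]) ?_
    · rw [inDeg, hE2, Multiset.filter_add, Multiset.card_add, hfin2,
        Multiset.filter_singleton, if_neg (by simp [nc2])]
      simpa [inDeg] using hin1
    · rw [outDeg, hE2, Multiset.filter_add, Multiset.card_add, hfout2,
        Multiset.filter_singleton, if_neg (by simp [np2])]
      simpa [outDeg] using hout1
    · rw [hE2]
      exact Multiset.mem_add.mpr (Or.inl (Multiset.mem_filter.mpr ⟨hp1, np1, hne⟩))
    · rw [hE2]
      exact Multiset.mem_add.mpr (Or.inl (Multiset.mem_filter.mpr ⟨hc1, hne, nc1⟩))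
    · rw [hE2, Multiset.filter_add, Multiset.filter_singleton, if_pos (by simp [np2, nc2])]
      rw [filter_comm']
      rw [add_right_comm]

lemma SD (hG : G.Good) (hs : G.Suppress w G1) (hd : G.DeleteParallel G2) :
    ∃ D, G1.DeleteParallel D ∧ G2.Suppress w D := by
  obtain ⟨p, c, hp, hc, hV1, hE1, hin, hout⟩ := hs.exists_data
  obtain ⟨e, hcnt, hV2, hE2⟩ := hd
  have heE : e ∈ G.E := Multiset.count_pos.mp (by omega)
  have he1 : e.1 ≠ w := by
    intro hh
    have h2 : Multiset.count e G.E = Multiset.count e (G.E.filter (fun f => f.1 = w)) := by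
      rw [Multiset.count_filter, if_pos hh]
    have h3 := Multiset.count_le_card e (G.E.filter (fun f => f.1 = w))
    rw [outDeg] at hout
    omega
  have he2 : e.2 ≠ w := by
    intro hh
    have h2 : Multiset.count e G.E = Multiset.count e (G.E.filter (fun f => f.2 = w)) := by
      rw [Multiset.count_filter, if_pos hh]
    have h3 := Multiset.count_le_card e (G.E.filter (fun f => f.2 = w))
    rw [inDeg] at hin
    omega
  have hpw_ne : (p, w) ≠ e := by
    intro hh
    have := inDeg_count hin hp
    rw [hh] at this; omega
  have hwc_ne : (w, c) ≠ e := by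
    intro hh
    have := outDeg_count hout hc
    rw [hh] at this; omega
  refine ⟨⟨G.V.erase w, (G.E.erase e).filter (fun f => f.1 ≠ w ∧ f.2 ≠ w) + {(p, c)}⟩, ?_, ?_⟩
  · refine ⟨e, ?_, by rw [hV1], ?_⟩
    · rw [hE1]
      have : Multiset.count e (G.E.filter (fun f => f.1 ≠ w ∧ f.2 ≠ w)) = Multiset.count e G.E := by
        rw [Multiset.count_filter, if_pos ⟨he1, he2⟩]
      rw [Multiset.count_add, this]
      omega
    · rw [hE1]
      ext x
      by_cases hxe : x = e
      · subst hxe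
        simp only [Multiset.count_add, Multiset.count_filter, if_pos (⟨he1, he2⟩ : x.1 ≠ w ∧ x.2 ≠ w),
          Multiset.count_erase_self]
        omega
      · simp only [Multiset.count_erase_of_ne hxe, Multiset.count_add, Multiset.count_filter]
  · refine suppress_of ?_ ?_ (p := p) (c := c) ?_ ?_ (by rw [hV2]) (by rw [hE2])
    · rw [inDeg, hE2]
      have := card_filter_erase' G.E heE (fun f => f.2 = w)
      rw [if_neg he2] at this
      rw [inDeg] at hin
      omega
    · rw [outDeg, hE2]
      have := card_filter_erase' G.E heE (fun f => f.1 = w)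
      rw [if_neg he1] at this
      rw [outDeg] at hout
      omega
    · rw [hE2]; exact Multiset.mem_erase_of_ne hpw_ne |>.mpr hp
    · rw [hE2]; exact Multiset.mem_erase_of_ne hwc_ne |>.mpr hc

lemma simp_diamond (hG : G.Good) (hB : SimpStep G B) (hC : SimpStep G C) :
    B = C ∨ ∃ D, SimpStep B D ∧ SimpStep C D := by
  rcases hB with ⟨w1, hs1⟩ | hd1
  · rcases hC with ⟨w2, hs2⟩ | hd2
    · by_cases hw : w1 = w2
      · subst hw; exact Or.inl (hs1.unique hs2)
      · right
        by_cases h12 : (w1, w2) ∈ G.E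
        · obtain ⟨D, hD1, hD2⟩ := SS_adj hG hs1 hs2 hw h12
          exact ⟨D, Or.inl ⟨w2, hD1⟩, Or.inl ⟨w1, hD2⟩⟩
        · by_cases h21 : (w2, w1) ∈ G.E
          · obtain ⟨D, hD2, hD1⟩ := SS_adj hG hs2 hs1 (Ne.symm hw) h21
            exact ⟨D, Or.inl ⟨w2, hD1⟩, Or.inl ⟨w1, hD2⟩⟩
          · obtain ⟨D, hD1, hD2⟩ := SS_nonadj hG hs1 hs2 hw h12 h21
            exact ⟨D, Or.inl ⟨w2, hD1⟩, Or.inl ⟨w1, hD2⟩⟩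
    · right
      obtain ⟨D, hD1, hD2⟩ := SD hG hs1 hd2
      exact ⟨D, Or.inr hD1, Or.inl ⟨w1, hD2⟩⟩
  · rcases hC with ⟨w2, hs2⟩ | hd2
    · right
      obtain ⟨D, hD1, hD2⟩ := SD hG hs2 hd1
      exact ⟨D, Or.inl ⟨w2, hD2⟩, Or.inr hD1⟩
    · obtain ⟨e1, hc1, hV1, hE1⟩ := hd1
      obtain ⟨e2, hc2, hV2, hE2⟩ := hd2
      by_cases he : e1 = e2
      · subst he
        exact Or.inl (ext'_s15 (by rw [hV1, hV2]) (by rw [hE1, hE2]))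
      · right
        refine ⟨⟨G.V, (G.E.erase e1).erase e2⟩, Or.inr ⟨e2, ?_, by rw [hV1], by rw [hE1]⟩,
          Or.inr ⟨e1, ?_, by rw [hV2], by rw [hE2, Multiset.erase_comm]⟩⟩
        · rw [hE1, Multiset.count_erase_of_ne (Ne.symm he)]; exact hc2
        · rw [hE2, Multiset.count_erase_of_ne he]; exact hc1

lemma rtg_good (hG : G.Good) (h : Relation.ReflTransGen SimpStep G H1) :
    Relation.ReflTransGen (fun X Y : Digraph' α => SimpStep X Y ∧ X.Good) G H1 ∧ H1.Good := by
  induction h with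
  | refl => exact ⟨Relation.ReflTransGen.refl, hG⟩
  | tail _ hbc ih => exact ⟨ih.1.tail ⟨hbc, ih.2⟩, SimpStep.good ih.2 hbc⟩

lemma normal_unique (hG : G.Good)
    (r1 : Relation.ReflTransGen SimpStep G H1) (n1 : ∀ K, ¬ SimpStep H1 K)
    (r2 : Relation.ReflTransGen SimpStep G H2) (n2 : ∀ K, ¬ SimpStep H2 K) : H1 = H2 := by
  have hdia : ∀ a b c : Digraph' α, (SimpStep a b ∧ a.Good) → (SimpStep a c ∧ a.Good) →
      ∃ d, Relation.ReflGen (fun X Y : Digraph' α => SimpStep X Y ∧ X.Good) b d ∧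
        Relation.ReflTransGen (fun X Y : Digraph' α => SimpStep X Y ∧ X.Good) c d := by
    rintro a b c ⟨hab, hga⟩ ⟨hac, _⟩
    rcases simp_diamond hga hab hac with rfl | ⟨d, hbd, hcd⟩
    · exact ⟨b, Relation.ReflGen.refl, Relation.ReflTransGen.refl⟩
    · exact ⟨d, Relation.ReflGen.single ⟨hbd, SimpStep.good hga hab⟩,
        Relation.ReflTransGen.single ⟨hcd, SimpStep.good hga hac⟩⟩
  obtain ⟨d, hd1, hd2⟩ := Relation.church_rosser hdia (rtg_good hG r1).1 (rtg_good hG r2).1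
  have e1 : H1 = d := by
    rcases hd1.cases_head with hh | ⟨k, ⟨hs, _⟩, _⟩
    · exact hh
    · exact absurd hs (n1 k)
  have e2 : H2 = d := by
    rcases hd2.cases_head with hh | ⟨k, ⟨hs, _⟩, _⟩
    · exact hh
    · exact absurd hs (n2 k)
  rw [e1, e2]

end Digraph'
end SecC
section SecD1
open List Multiset Relation Digraph'

variable {α : Type*} [DecidableEq α]

namespace Digraph'

variable {G : Digraph' α} {u v w x : α}

lemma not_mem_left_of_out_zero {l1 l2 : List α} (h : G.PathFrom u v (l1 ++ l2))
    (hl2 : l2 ≠ []) (h0 : G.outDeg x = 0) : x ∉ l1 := by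
  intro hx
  obtain ⟨m1, m2, rfl⟩ := List.append_of_mem hx
  rw [show (m1 ++ x :: m2) ++ l2 = m1 ++ x :: (m2 ++ l2) from by simp] at h
  have hs := h.decomp_suffix
  cases hm : m2 ++ l2 with
  | nil => exact hl2 (List.append_eq_nil_iff.mp hm).2
  | cons z rest =>
    rw [hm] at hs
    exact not_mem_of_outDeg_zero h0 (hs.pairs_mem (x, z) (by simp))

lemma succ_in_left {l1 l2 : List α} (h : G.PathFrom u v (l1 ++ x :: l2)) (hl2 : l2 ≠ []) :
    ∃ z rest, l2 = z :: rest ∧ (x, z) ∈ G.E := by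
  have hs := h.decomp_suffix
  cases l2 with
  | nil => exact absurd rfl hl2
  | cons z rest => exact ⟨z, rest, rfl, hs.pairs_mem (x, z) (by simp)⟩

end Digraph'


lemma decEq_eq {β : Type*} (i1 i2 : DecidableEq β) : i1 = i2 := by
  funext x y
  exact Subsingleton.elim _ _

lemma inDeg_irrel (i1 i2 : DecidableEq α) (G : Digraph' α) (v : α) :
    @Digraph'.inDeg α i1 G v = @Digraph'.inDeg α i2 G v := by rw [decEq_eq i1 i2]

lemma outDeg_irrel (i1 i2 : DecidableEq α) (G : Digraph' α) (v : α) :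
    @Digraph'.outDeg α i1 G v = @Digraph'.outDeg α i2 G v := by rw [decEq_eq i1 i2]

lemma count_irrel {β : Type*} (i1 i2 : DecidableEq β) (x : β) (s : Multiset β) :
    @Multiset.count β i1 x s = @Multiset.count β i2 x s := by rw [decEq_eq i1 i2]

lemma noPar {N : PhyloNet α} (e : α × α) : N.G.E.count e ≤ 1 :=
  (count_irrel _ _ _ _).trans_le (N.noParallel e)

/-- All the structural facts extracted from a reticulated-cherry cut. -/
structure CutFacts (N N' : PhyloNet α) (a b pa pb p q : α) : Prop where
  haX : a ∈ N.X
  hbX : b ∈ N.X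
  hab : a ≠ b
  hX' : N'.X = N.X
  hroot : N'.root = N.root
  hpaa : (pa, a) ∈ N.G.E
  hpbb : (pb, b) ∈ N.G.E
  hpapb : (pa, pb) ∈ N.G.E
  hppa : (p, pa) ∈ N.G.E
  hqpb : (q, pb) ∈ N.G.E
  hV' : N'.G.V = (N.G.V.erase pa).erase pb
  memE' : ∀ e : α × α, e ∈ N'.G.E ↔
    (e ∈ N.G.E ∧ e.1 ≠ pa ∧ e.2 ≠ pa ∧ e.1 ≠ pb ∧ e.2 ≠ pb) ∨ e = (p, a) ∨ e = (q, b)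
  houta : N.G.outDeg a = 0
  houtb : N.G.outDeg b = 0
  hinpa : N.G.inDeg pa = 1
  houtpa : N.G.outDeg pa = 2
  hinpb : N.G.inDeg pb = 2
  houtpb : N.G.outDeg pb = 1
  hinroot : N.G.inDeg N.root = 0
  leafX : ∀ x ∈ N.X, x ∈ N.G.V ∧ N.G.inDeg x = 1 ∧ N.G.outDeg x = 0
  leafX' : ∀ x ∈ N'.X, x ∈ N'.G.V ∧ N'.G.inDeg x = 1 ∧ N'.G.outDeg x = 0
  out_pa : ∀ z, (pa, z) ∈ N.G.E → z = a ∨ z = pb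
  out_pb : ∀ z, (pb, z) ∈ N.G.E → z = b
  in_a : ∀ y, (y, a) ∈ N.G.E → y = pa
  in_b : ∀ y, (y, b) ∈ N.G.E → y = pb
  in_pa : ∀ y, (y, pa) ∈ N.G.E → y = p
  papb : pa ≠ pb
  paa : pa ≠ a
  pab : pa ≠ b
  pba : pb ≠ a
  pbb : pb ≠ b
  ppa : p ≠ pa
  ppb : p ≠ pb
  pna : p ≠ a
  pnb : p ≠ b
  qpa : q ≠ pa
  qpb : q ≠ pb
  qna : q ≠ a
  qnb : q ≠ b
  rpa : N.root ≠ pa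
  rpb : N.root ≠ pb
  hpaE : (p, a) ∉ N.G.E
  hqbE : (q, b) ∉ N.G.E

variable {N N' : PhyloNet α} {a b pa pb p q : α}

lemma goodN (N : PhyloNet α) : N.G.Good := ⟨N.wf, N.acyclic⟩

lemma cutRetCherry_facts (h : N.CutRetCherry a b N') :
    ∃ pa pb p q, CutFacts N N' a b pa pb p q := by
  obtain ⟨haX, hbX, hab, hX', hroot, pa, pb, hpaa, hpbb, hpapb, hinpb, G1, hG1V, hG1E, G2,
    hs1, hs2⟩ := h
  have hgood : N.G.Good := goodN N
  rcases N.binary with ⟨_, hE0, _⟩ | hbin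
  · rw [hE0] at hpaa; simp at hpaa
  obtain ⟨hinroot0, houtroot, leafX0, hleaf2, hmid⟩ := hbin
  have leafX : ∀ x ∈ N.X, x ∈ N.G.V ∧ N.G.inDeg x = 1 ∧ N.G.outDeg x = 0 := fun x hx =>
    ⟨(leafX0 x hx).1, (inDeg_irrel _ _ _ _).trans (leafX0 x hx).2.1,
      (outDeg_irrel _ _ _ _).trans (leafX0 x hx).2.2⟩
  have hinroot : N.G.inDeg N.root = 0 := (inDeg_irrel _ _ _ _).trans hinroot0
  have houta : N.G.outDeg a = 0 := (leafX a haX).2.2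
  have hina : N.G.inDeg a = 1 := (leafX a haX).2.1
  have houtb : N.G.outDeg b = 0 := (leafX b hbX).2.2
  have hinb : N.G.inDeg b = 1 := (leafX b hbX).2.1
  have paV : pa ∈ N.G.V := (N.wf _ hpaa).1
  have pbV : pb ∈ N.G.V := (N.wf _ hpapb).2
  have papb : pa ≠ pb := fun hh => no_self_loop hgood (hh ▸ hpapb)
  have paa : pa ≠ a := fun hh => no_self_loop hgood (hh ▸ hpaa)
  have pbb : pb ≠ b := fun hh => no_self_loop hgood (hh ▸ hpbb)
  have pba : pb ≠ a := fun hh => by rw [hh, hina] at hinpb; omega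
  have pab : pa ≠ b := fun hh => not_mem_of_outDeg_zero houtb (hh ▸ hpapb)
  obtain ⟨p, c, hppa1, hpac1, hG2V, hG2E, hin1, hout1⟩ := hs1.exists_data
  rw [hG1E] at hppa1 hpac1
  rw [Digraph'.inDeg, hG1E] at hin1
  rw [Digraph'.outDeg, hG1E] at hout1
  have hinpa : N.G.inDeg pa = 1 := by
    have hcfe := card_filter_erase' N.G.E hpapb (fun e => e.2 = pa)
    rw [if_neg (show ¬((pa, pb).2 = pa) from fun hh => papb hh.symm)] at hcfe
    rw [Digraph'.inDeg, hcfe, hin1]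
  have houtpa : N.G.outDeg pa = 2 := by
    have hcfe := card_filter_erase' N.G.E hpapb (fun e => e.1 = pa)
    rw [if_pos (show (pa, pb).1 = pa from rfl)] at hcfe
    rw [Digraph'.outDeg, hcfe, hout1]
  have rpa : N.root ≠ pa := fun hh => by rw [← hh, hinroot] at hinpa; omega
  have rpb : N.root ≠ pb := fun hh => by rw [← hh, hinroot] at hinpb; omega
  have pbnX : pb ∉ N.X := fun hX => by have := (leafX pb hX).2.1; rw [hinpb] at this; omega
  have houtpb : N.G.outDeg pb = 1 := by
    rcases hmid pb pbV (fun hh => rpb hh.symm) pbnX with ⟨h1, _⟩ | ⟨_, h2⟩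
    · exfalso
      have h1' : N.G.inDeg pb = 1 := (inDeg_irrel _ _ _ _).trans h1
      rw [hinpb] at h1'; omega
    · exact (outDeg_irrel _ _ _ _).trans h2
  have out_pb := outDeg_unique houtpb hpbb
  have out_pa := out_pair houtpa hpaa hpapb (fun hh => pba hh.symm)
  have in_a := inDeg_unique hina hpaa
  have in_b := inDeg_unique hinb hpbb
  have hca : a = c := by
    rcases out_pa c (Multiset.mem_of_mem_erase hpac1) with hh | hh
    · exact hh.symm
    · exfalso
      rw [hh] at hpac1
      have h9 : Multiset.count (pa, pb) (N.G.E.erase (pa, pb)) = Multiset.count (pa, pb) N.G.E - 1 :=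
        Multiset.count_erase_self _ _
      have h10 := noPar (N := N) (pa, pb)
      have h11 := Multiset.one_le_count_iff_mem.mpr hpac1
      omega
  obtain rfl := hca
  have hppa : (p, pa) ∈ N.G.E := Multiset.mem_of_mem_erase hppa1
  have ppa : p ≠ pa := fun hh => no_self_loop hgood (hh ▸ hppa)
  have ppb : p ≠ pb := fun hh => pab (out_pb pa (hh ▸ hppa))
  have pna : p ≠ a := fun hh => not_mem_of_outDeg_zero houta (hh ▸ hppa)
  have pnb : p ≠ b := fun hh => not_mem_of_outDeg_zero houtb (hh ▸ hppa)
  have in_pa := inDeg_unique hinpa hppa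
  obtain ⟨q, c', hqpb2, hpbc2, hVn, hEn, hin2, hout2⟩ := hs2.exists_data
  rw [hG2E] at hqpb2 hpbc2
  have hqmem : (q, pb) ∈ G1.E.filter (fun e => e.1 ≠ pa ∧ e.2 ≠ pa) := by
    rcases Multiset.mem_add.mp hqpb2 with hm | hm
    · exact hm
    · simp at hm; exact absurd hm.2 pba
  obtain ⟨hq1, qpa, _⟩ := Multiset.mem_filter.mp hqmem
  rw [hG1E] at hq1
  have hqpb : (q, pb) ∈ N.G.E := Multiset.mem_of_mem_erase hq1
  have qpb : q ≠ pb := fun hh => no_self_loop hgood (hh ▸ hqpb)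
  have qna : q ≠ a := fun hh => not_mem_of_outDeg_zero houta (hh ▸ hqpb)
  have qnb : q ≠ b := fun hh => not_mem_of_outDeg_zero houtb (hh ▸ hqpb)
  have hcb : b = c' := by
    rcases Multiset.mem_add.mp hpbc2 with hm | hm
    · obtain ⟨hm1, _, _⟩ := Multiset.mem_filter.mp hm
      rw [hG1E] at hm1
      exact (out_pb c' (Multiset.mem_of_mem_erase hm1)).symm
    · exfalso
      simp at hm
      exact ppb hm.1.symm
  obtain rfl := hcb
  have hV' : N'.G.V = (N.G.V.erase pa).erase pb := by rw [hVn, hG2V, hG1V]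
  have memE' : ∀ e : α × α, e ∈ N'.G.E ↔
      (e ∈ N.G.E ∧ e.1 ≠ pa ∧ e.2 ≠ pa ∧ e.1 ≠ pb ∧ e.2 ≠ pb) ∨ e = (p, a) ∨ e = (q, b) := by
    intro e
    rw [hEn, Multiset.mem_add, Multiset.mem_filter, hG2E, Multiset.mem_add,
      Multiset.mem_filter, hG1E]
    constructor
    · rintro (⟨⟨he1, hpa1, hpa2⟩ | he, hpb1, hpb2⟩ | he)
      · exact Or.inl ⟨Multiset.mem_of_mem_erase he1, hpa1, hpa2, hpb1, hpb2⟩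
      · simp at he; exact Or.inr (Or.inl he)
      · simp at he; exact Or.inr (Or.inr he)
    · rintro (⟨he1, h1, h2, h3, h4⟩ | rfl | rfl)
      · left
        refine ⟨Or.inl ⟨Multiset.mem_erase_of_ne ?_ |>.mpr he1, h1, h2⟩, h3, h4⟩
        intro hh
        exact h1 (by rw [hh])
      · left
        exact ⟨Or.inr (by simp), ppb, fun hh => pba hh.symm⟩
      · right; simp
  have hpaE : (p, a) ∉ N.G.E := fun hh => ppa (in_a p hh)
  have hqbE : (q, b) ∉ N.G.E := fun hh => qpb (in_b q hh)
  have hqbE' : (q, b) ∈ N'.G.E := (memE' _).mpr (Or.inr (Or.inr rfl))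
  have leafX' : ∀ x ∈ N'.X, x ∈ N'.G.V ∧ N'.G.inDeg x = 1 ∧ N'.G.outDeg x = 0 := by
    rcases N'.binary with ⟨_, hE0', _⟩ | hbin'
    · rw [hE0'] at hqbE'; simp at hqbE'
    · intro x hx
      exact ⟨(hbin'.2.2.1 x hx).1, (inDeg_irrel _ _ _ _).trans (hbin'.2.2.1 x hx).2.1,
        (outDeg_irrel _ _ _ _).trans (hbin'.2.2.1 x hx).2.2⟩
  exact ⟨pa, pb, p, q,
    { haX := haX, hbX := hbX, hab := hab, hX' := hX', hroot := hroot, hpaa := hpaa,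
      hpbb := hpbb, hpapb := hpapb, hppa := hppa, hqpb := hqpb, hV' := hV', memE' := memE',
      houta := houta, houtb := houtb, hinpa := hinpa, houtpa := houtpa, hinpb := hinpb,
      houtpb := houtpb, hinroot := hinroot, leafX := leafX, leafX' := leafX',
      out_pa := out_pa, out_pb := out_pb, in_a := in_a, in_b := in_b, in_pa := in_pa,
      papb := papb, paa := paa, pab := pab, pba := pba, pbb := pbb, ppa := ppa, ppb := ppb,
      pna := pna, pnb := pnb, qpa := qpa, qpb := qpb, qna := qna, qnb := qnb,
      rpa := rpa, rpb := rpb, hpaE := hpaE, hqbE := hqbE }⟩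

end SecD1
section SecD2
open List Multiset Relation Digraph'

variable {α : Type*} [DecidableEq α] {N N' : PhyloNet α} {a b pa pb p q : α}

lemma CutFacts.memV' (F : CutFacts N N' a b pa pb p q) (v : α) :
    v ∈ N'.G.V ↔ (v ≠ pa ∧ v ≠ pb ∧ v ∈ N.G.V) := by
  rw [F.hV', Finset.mem_erase, Finset.mem_erase]; tauto

lemma CutFacts.noPb (F : CutFacts N N' a b pa pb p q) {r x : α} {pth : List α}
    (hp : N.G.PathFrom r x pth) (hx : x ∈ N.X) (hxb : x ≠ b) : pb ∉ pth := by
  intro hmem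
  rcases succ_of_mem hp hmem with heq | ⟨z, hz, hzp⟩
  · have h1 := (F.leafX x hx).2.1
    rw [← heq, F.hinpb] at h1; omega
  · have hzb : z = b := F.out_pb z hz
    subst hzb
    rcases succ_of_mem hp hzp with heq | ⟨z2, hz2, _⟩
    · exact hxb heq.symm
    · exact not_mem_of_outDeg_zero F.houtb hz2

lemma CutFacts.paMem (F : CutFacts N N' a b pa pb p q) {r x : α} {pth : List α}
    (hp : N.G.PathFrom r x pth) (hx : x ∈ N.X) (hxb : x ≠ b)
    (hmem : pa ∈ pth) : x = a := by
  rcases succ_of_mem hp hmem with heq | ⟨z, hz, hzp⟩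
  · exfalso
    have h1 := (F.leafX x hx).2.2
    rw [← heq, F.houtpa] at h1; omega
  · rcases F.out_pa z hz with hza | hzb
    · subst hza
      rcases succ_of_mem hp hzp with heq | ⟨z2, hz2, _⟩
      · exact heq.symm
      · exact absurd hz2 (not_mem_of_outDeg_zero F.houta)
    · subst hzb
      exact absurd hzp (F.noPb hp hx hxb)

lemma CutFacts.haX' (F : CutFacts N N' a b pa pb p q) : a ∈ N'.X := by
  rw [F.hX']; exact F.haX

lemma CutFacts.hbX' (F : CutFacts N N' a b pa pb p q) : b ∈ N'.X := by
  rw [F.hX']; exact F.hbX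

lemma CutFacts.houta' (F : CutFacts N N' a b pa pb p q) : N'.G.outDeg a = 0 :=
  (F.leafX' a F.haX').2.2

lemma CutFacts.houtb' (F : CutFacts N N' a b pa pb p q) : N'.G.outDeg b = 0 :=
  (F.leafX' b F.hbX').2.2

lemma CutFacts.hpaE' (F : CutFacts N N' a b pa pb p q) : (p, a) ∈ N'.G.E :=
  (F.memE' _).mpr (Or.inr (Or.inl rfl))

lemma CutFacts.in_a' (F : CutFacts N N' a b pa pb p q) : ∀ y, (y, a) ∈ N'.G.E → y = p :=
  inDeg_unique (F.leafX' a F.haX').2.1 F.hpaE'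

lemma CutFacts.noB' (F : CutFacts N N' a b pa pb p q) {r x : α} {pth' : List α}
    (hp' : N'.G.PathFrom r x pth') (hxb : x ≠ b) : b ∉ pth' := by
  intro hm
  rcases succ_of_mem hp' hm with heq | ⟨z, hz, _⟩
  · exact hxb heq.symm
  · exact not_mem_of_outDeg_zero F.houtb' hz

lemma CutFacts.aEnd' (F : CutFacts N N' a b pa pb p q) {r x : α} {pth' : List α}
    (hp' : N'.G.PathFrom r x pth') (hm : a ∈ pth') : a = x := by
  rcases succ_of_mem hp' hm with heq | ⟨z, hz, _⟩
  · exact heq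
  · exact absurd hz (not_mem_of_outDeg_zero F.houta')

lemma CutFacts.transfer1 (F : CutFacts N N' a b pa pb p q) {r x : α} {pth : List α}
    (hp : N.G.PathFrom r x pth) (hx : x ∈ N.X) (hxb : x ≠ b)
    (hr1 : r ≠ pa) (hr2 : r ≠ pb) :
    ∃ pth', N'.G.PathFrom r x pth' ∧ (∀ v, v ∈ pth' ↔ (v ∈ pth ∧ v ≠ pa)) ∧
      (∀ e : α × α, e ∈ pairs pth' ↔
        ((e ∈ pairs pth ∧ e.1 ≠ pa ∧ e.2 ≠ pa) ∨ (e = (p, a) ∧ (pa, a) ∈ pairs pth))) := by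
  have hnopb : pb ∉ pth := F.noPb hp hx hxb
  by_cases hpam : pa ∈ pth
  case neg =>
    refine ⟨pth, ⟨⟨hp.ne_nil, ?_, ?_⟩, hp.2.1, hp.2.2⟩, ?_, ?_⟩
    · intro z hz
      exact (F.memV' z).mpr ⟨fun hh => hpam (hh ▸ hz), fun hh => hnopb (hh ▸ hz), hp.mem_V z hz⟩
    · rw [chain'_iff_pairs]
      intro e he
      have hm := mem_of_mem_pairs he
      exact (F.memE' e).mpr (Or.inl ⟨hp.pairs_mem e he, fun hh => hpam (hh ▸ hm.1),
        fun hh => hpam (hh ▸ hm.2), fun hh => hnopb (hh ▸ hm.1), fun hh => hnopb (hh ▸ hm.2)⟩)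
    · intro v
      exact ⟨fun hv => ⟨hv, fun hh => hpam (hh ▸ hv)⟩, fun hv => hv.1⟩
    · intro e
      constructor
      · intro he
        have hm := mem_of_mem_pairs he
        exact Or.inl ⟨he, fun hh => hpam (hh ▸ hm.1), fun hh => hpam (hh ▸ hm.2)⟩
      · rintro (⟨he, _, _⟩ | ⟨_, hpaa2⟩)
        · exact he
        · exact absurd (mem_of_mem_pairs hpaa2).1 hpam
  case pos =>
    obtain rfl : a = x := (F.paMem hp hx hxb hpam).symm
    have hra : r ≠ a := by
      intro hh
      have h0 : N.G.outDeg r = 0 := by rw [hh]; exact F.houta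
      obtain ⟨hpth1, _⟩ := eq_single_of_no_out hp h0
      rw [hpth1] at hpam
      simp at hpam
      exact F.paa (hpam.trans hh)
    rcases hp.concat_cases with ⟨_, hcontra⟩ | ⟨q0, y, hpth, hq0, hyarc⟩
    · exact absurd hcontra hra
    obtain rfl : pa = y := (F.in_a y hyarc).symm
    subst hpth
    have hanq0 : a ∉ q0 := not_mem_left_of_out_zero hp (by simp) F.houta
    have hpanq0 : pa ∉ q0 := by
      intro hmem0
      obtain ⟨m1, m2, hq0eq⟩ := List.append_of_mem hmem0
      have hp2 := hp
      rw [hq0eq, show (m1 ++ pa :: m2) ++ [pa, a] = m1 ++ pa :: (m2 ++ [pa, a]) from by simp]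
        at hp2
      obtain ⟨z, rest, hzr, hz⟩ := succ_in_left hp2 (by simp)
      rcases F.out_pa z hz with hza | hzb
      · cases m2 with
        | nil =>
          simp at hzr
          exact F.paa (hzr.1.trans hza)
        | cons h2 t2 =>
          simp at hzr
          refine hanq0 ?_
          rw [hq0eq, ← hza, hzr.1]
          simp
      · cases m2 with
        | nil =>
          simp at hzr
          exact F.papb (hzr.1.trans hzb)
        | cons h2 t2 =>
          simp at hzr
          refine hnopb ?_
          rw [hq0eq, ← hzb, hzr.1]
          simp
    rcases hq0.concat_cases with ⟨_, hcontra⟩ | ⟨q1, y2, hq0eq, hq1, hy2arc⟩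
    · exact absurd hcontra hr1
    obtain rfl : p = y2 := (F.in_pa y2 hy2arc).symm
    have hq0eq' : q0 = q1 ++ [p] := by
      have h2 : q0 ++ [pa] = (q1 ++ [p]) ++ [pa] := by rw [hq0eq]; simp
      have h3 := congrArg List.dropLast h2
      rwa [List.dropLast_concat, List.dropLast_concat] at h3
    have hq0ne : q0 ≠ [] := by rw [hq0eq']; simp
    have hpairs_pth : pairs (q0 ++ [pa, a]) = pairs q0 ++ [(p, pa), (pa, a)] := by
      rw [pairs_concat_concat, hq0eq',
        show (q1 ++ [p]) ++ [pa] = q1 ++ [p, pa] from by simp, pairs_concat_concat,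
        show q1 ++ [p] = q0 from hq0eq'.symm]
      simp
    have hpairs_pth' : pairs (q0 ++ [a]) = pairs q0 ++ [(p, a)] := by
      rw [hq0eq', show (q1 ++ [p]) ++ [a] = q1 ++ [p, a] from by simp, pairs_concat_concat,
        show q1 ++ [p] = q0 from hq0eq'.symm]
    have hq0mem : ∀ z ∈ q0, z ∈ q0 ++ [pa, a] := fun z hz => by simp [hz]
    refine ⟨q0 ++ [a], ⟨⟨by simp, ?_, ?_⟩, ?_, by simp⟩, ?_, ?_⟩
    · -- vertices
      intro z hz
      rcases List.mem_append.mp hz with hz | hz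
      · exact (F.memV' z).mpr ⟨fun hh => hpanq0 (hh ▸ hz), fun hh => hnopb (hh ▸ hq0mem z hz),
          hp.mem_V z (hq0mem z hz)⟩
      · simp at hz
        subst hz
        exact (F.memV' z).mpr ⟨fun hh => F.paa hh.symm, fun hh => F.pba hh.symm,
          hp.mem_V z (by simp)⟩
    · -- chain
      rw [chain'_iff_pairs, hpairs_pth']
      intro e he
      rcases List.mem_append.mp he with he | he
      · have hm := mem_of_mem_pairs he
        have heN : e ∈ N.G.E := hp.pairs_mem e (by rw [hpairs_pth]; exact List.mem_append_left _ he)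
        exact (F.memE' e).mpr (Or.inl ⟨heN, fun hh => hpanq0 (hh ▸ hm.1),
          fun hh => hpanq0 (hh ▸ hm.2), fun hh => hnopb (hh ▸ hq0mem _ hm.1),
          fun hh => hnopb (hh ▸ hq0mem _ hm.2)⟩)
      · simp at he
        subst he
        exact F.hpaE'
    · -- head
      rw [List.head?_append_of_ne_nil _ hq0ne]
      have hh := hp.2.1
      rwa [List.head?_append_of_ne_nil _ hq0ne] at hh
    · -- vertex iff
      intro v
      have h1 : v ∈ q0 → v ≠ pa := fun hv hh => hpanq0 (hh ▸ hv)
      have h2 : v = a → v = pa → False := fun h h' => F.paa (h'.symm.trans h)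
      simp only [List.mem_append, List.mem_cons, List.not_mem_nil, or_false]
      tauto
    · -- edge iff
      intro e
      rw [hpairs_pth', hpairs_pth]
      have h1 : e ∈ pairs q0 → e.1 ≠ pa := fun he hh => hpanq0 (hh ▸ (mem_of_mem_pairs he).1)
      have h2 : e ∈ pairs q0 → e.2 ≠ pa := fun he hh => hpanq0 (hh ▸ (mem_of_mem_pairs he).2)
      have h3 : e = (p, pa) → ¬(e.2 ≠ pa) := fun hh hc => hc (by rw [hh])
      have h4 : e = (pa, a) → ¬(e.1 ≠ pa) := fun hh hc => hc (by rw [hh])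
      have h5 : ((pa : α), a) = (pa, a) := rfl
      simp only [List.mem_append, List.mem_cons, List.not_mem_nil, or_false]
      tauto

lemma CutFacts.transfer2 (F : CutFacts N N' a b pa pb p q) {r x : α} {pth' : List α}
    (hp' : N'.G.PathFrom r x pth') (hx : x ∈ N.X) (hxb : x ≠ b) :
    ∃ pth, N.G.PathFrom r x pth ∧
      (∀ v, v ∈ pth ↔ (v ∈ pth' ∨ (v = pa ∧ (p, a) ∈ pairs pth'))) ∧
      (∀ e : α × α, e ∈ pairs pth ↔ ((e ∈ pairs pth' ∧ e ≠ (p, a)) ∨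
        ((e = (p, pa) ∨ e = (pa, a)) ∧ (p, a) ∈ pairs pth'))) := by
  have hbnp : b ∉ pth' := F.noB' hp' hxb
  have hpanp : pa ∉ pth' := fun hh => (((F.memV' pa).mp (hp'.mem_V pa hh)).1 rfl)
  have hpbnp : pb ∉ pth' := fun hh => (((F.memV' pb).mp (hp'.mem_V pb hh)).2.1 rfl)
  have harc : ∀ e ∈ pairs pth', e = (p, a) ∨
      (e ∈ N.G.E ∧ e.1 ≠ pa ∧ e.2 ≠ pa ∧ e.1 ≠ pb ∧ e.2 ≠ pb) := by
    intro e he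
    rcases (F.memE' e).mp (hp'.pairs_mem e he) with hh | hh | hh
    · exact Or.inr hh
    · exact Or.inl hh
    · exfalso
      refine hbnp ?_
      have := (mem_of_mem_pairs he).2
      rwa [hh] at this
  by_cases hpae : (p, a) ∈ pairs pth'
  case neg =>
    refine ⟨pth', ⟨⟨hp'.ne_nil, ?_, ?_⟩, hp'.2.1, hp'.2.2⟩, ?_, ?_⟩
    · intro z hz
      exact ((F.memV' z).mp (hp'.mem_V z hz)).2.2
    · rw [chain'_iff_pairs]
      intro e he
      rcases harc e he with rfl | hh
      · exact absurd he hpae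
      · exact hh.1
    · intro v
      simp [hpae]
    · intro e
      simp only [hpae, and_false, false_or, or_false]
      exact ⟨fun he => ⟨he, fun hh => hpae (hh ▸ he)⟩, fun he => he.1⟩
  case pos =>
    obtain rfl : a = x := F.aEnd' hp' (mem_of_mem_pairs hpae).2
    have hra : r ≠ a := by
      intro hh
      have h0 : N'.G.outDeg r = 0 := by rw [hh]; exact F.houta'
      obtain ⟨hpth1, _⟩ := eq_single_of_no_out hp' h0
      rw [hpth1] at hpae
      simp [pairs] at hpae
    rcases hp'.concat_cases with ⟨_, hcontra⟩ | ⟨q0, y, hpth, hq0, hyarc⟩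
    · exact absurd hcontra hra
    obtain rfl : p = y := (F.in_a' y hyarc).symm
    subst hpth
    have hanq0 : a ∉ q0 := not_mem_left_of_out_zero hp' (by simp) F.houta'
    have hpairs' : pairs (q0 ++ [p, a]) = pairs (q0 ++ [p]) ++ [(p, a)] :=
      pairs_concat_concat q0 p a
    have hpairs : pairs ((q0 ++ [p]) ++ [pa, a]) = pairs (q0 ++ [p]) ++ [(p, pa), (pa, a)] := by
      rw [pairs_concat_concat, show (q0 ++ [p]) ++ [pa] = q0 ++ [p, pa] from by simp,
        pairs_concat_concat]
      simp
    have hmemq0p : ∀ z ∈ q0 ++ [p], z ∈ q0 ++ [p, a] := by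
      intro z hz
      rcases List.mem_append.mp hz with hz | hz
      · simp [hz]
      · simp at hz; simp [hz]
    have hpaprefix : (p, a) ∉ pairs (q0 ++ [p]) := by
      intro hh
      have := (mem_of_mem_pairs hh).2
      rcases List.mem_append.mp this with hz | hz
      · exact hanq0 hz
      · simp at hz; exact F.pna hz.symm
    refine ⟨(q0 ++ [p]) ++ [pa, a], ⟨⟨by simp, ?_, ?_⟩, ?_, by simp⟩, ?_, ?_⟩
    · -- vertices
      intro z hz
      rcases List.mem_append.mp hz with hz | hz
      · exact ((F.memV' z).mp (hp'.mem_V z (hmemq0p z hz))).2.2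
      · simp at hz
        rcases hz with rfl | rfl
        · exact (N.wf _ F.hpaa).1
        · exact (N.wf _ F.hpaa).2
    · -- chain
      rw [chain'_iff_pairs, hpairs]
      intro e he
      rcases List.mem_append.mp he with he | he
      · have hein : e ∈ pairs (q0 ++ [p, a]) := by rw [hpairs']; exact List.mem_append_left _ he
        rcases harc e hein with rfl | hh
        · exact absurd he hpaprefix
        · exact hh.1
      · simp at he
        rcases he with rfl | rfl
        · exact F.hppa
        · exact F.hpaa
    · -- head
      rw [List.head?_append_of_ne_nil _ (by simp)]
      have hh := hp'.2.1
      rwa [show q0 ++ [p, a] = (q0 ++ [p]) ++ [a] from by simp,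
        List.head?_append_of_ne_nil _ (by simp)] at hh
    · -- vertex iff
      intro v
      simp only [List.mem_append, List.mem_cons, List.not_mem_nil, or_false, hpae, and_true]
      tauto
    · -- edge iff
      intro e
      rw [hpairs, hpairs']
      have h1 : e ∈ pairs (q0 ++ [p]) → e ≠ (p, a) := fun he hh => hpaprefix (hh ▸ he)
      simp only [List.mem_append, List.mem_cons, List.not_mem_nil, or_false, hpae, and_true]
      tauto

end SecD2
section SecD3
open List Multiset Relation Digraph'

variable {α : Type*} [DecidableEq α] {N N' : PhyloNet α} {a b pa pb p q : α} {A : Finset α}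

lemma CutFacts.reaches21 (F : CutFacts N N' a b pa pb p q) {u v : α}
    (h : N'.G.Reaches u v) : N.G.Reaches u v := by
  rw [reaches_iff N'.wf] at h
  rw [reaches_iff N.wf]
  obtain ⟨huV, hr⟩ := h
  refine ⟨((F.memV' u).mp huV).2.2, ?_⟩
  induction hr with
  | refl => exact Relation.ReflTransGen.refl
  | @tail b1 c1 _ hbc ih =>
    rcases (F.memE' (b1, c1)).mp hbc with ⟨he, _⟩ | he | he
    · exact ih.tail he
    · have he' := Prod.ext_iff.mp he
      have s1 : (b1, pa) ∈ N.G.E := by rw [show b1 = p from he'.1]; exact F.hppa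
      have s2 : (pa, c1) ∈ N.G.E := by rw [show c1 = a from he'.2]; exact F.hpaa
      exact (ih.tail s1).tail s2
    · have he' := Prod.ext_iff.mp he
      have s1 : (b1, pb) ∈ N.G.E := by rw [show b1 = q from he'.1]; exact F.hqpb
      have s2 : (pb, c1) ∈ N.G.E := by rw [show c1 = b from he'.2]; exact F.hpbb
      exact (ih.tail s1).tail s2

lemma CutFacts.SA21 (F : CutFacts N N' a b pa pb p q) (hA : A ⊆ N.X) (hbA : b ∉ A) {v : α}
    (hv : N'.G.StableAncestor N.root A v) : N.G.StableAncestor N.root A v := by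
  intro x hxA pth hpth
  have hx : x ∈ N.X := hA hxA
  have hxb : x ≠ b := fun hh => hbA (hh ▸ hxA)
  obtain ⟨pth', hp', hviff, _⟩ := F.transfer1 hpth hx hxb F.rpa F.rpb
  exact ((hviff v).mp (hv x hxA pth' hp')).1

lemma CutFacts.SA12 (F : CutFacts N N' a b pa pb p q) (hA : A ⊆ N.X) (hbA : b ∉ A) {v : α}
    (hv : N.G.StableAncestor N.root A v) (hvpa : v ≠ pa) :
    N'.G.StableAncestor N.root A v := by
  intro x hxA pth' hpth'
  have hx : x ∈ N.X := hA hxA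
  have hxb : x ≠ b := fun hh => hbA (hh ▸ hxA)
  obtain ⟨pth, hp, hviff, _⟩ := F.transfer2 hpth' hx hxb
  rcases (hviff v).mp (hv x hxA pth hp) with hm | ⟨hh, _⟩
  · exact hm
  · exact absurd hh hvpa

lemma CutFacts.SAnotpa (F : CutFacts N N' a b pa pb p q) (hA : A ⊆ N.X) {x0 : α}
    (hx0 : x0 ∈ A) : ¬ N'.G.StableAncestor N.root A pa := by
  intro hsa
  have hx0V : x0 ∈ N'.G.V := (F.leafX' x0 (by rw [F.hX']; exact hA hx0)).1
  obtain ⟨pth, hpth⟩ := N'.reach x0 hx0V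
  rw [F.hroot] at hpth
  have hm := hsa x0 hx0 pth hpth
  exact ((F.memV' pa).mp (hpth.mem_V pa hm)).1 rfl

lemma CutFacts.r_ne_pa (F : CutFacts N N' a b pa pb p q) (hA : A ⊆ N.X) (hbA : b ∉ A)
    {r : α} (hl : N.G.IsLowestSA N.root A r) : r ≠ pa := by
  intro hh
  have hSAa : N.G.StableAncestor N.root A a := by
    intro x hxA pth hpth
    have hrmem := hl.1 x hxA pth hpth
    rw [hh] at hrmem
    have hxa : x = a := F.paMem hpth (hA hxA) (fun h2 => hbA (h2 ▸ hxA)) hrmem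
    rw [← hxa]
    exact hpth.end_mem
  have hna : a ≠ r := fun h2 => F.paa (h2.trans hh).symm
  have hre : N.G.Reaches r a := by rw [hh]; exact two_path (goodN N) F.hpaa
  exact hl.2 a hSAa hna hre

lemma CutFacts.r_ne_pb (F : CutFacts N N' a b pa pb p q) (hA : A ⊆ N.X) (hbA : b ∉ A)
    {x0 r : α} (hx0 : x0 ∈ A) (hl : N.G.IsLowestSA N.root A r) : r ≠ pb := by
  intro hh
  have hx0V : x0 ∈ N.G.V := (F.leafX x0 (hA hx0)).1
  obtain ⟨pth, hpth⟩ := N.reach x0 hx0V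
  have hrm := hl.1 x0 hx0 pth hpth
  rw [hh] at hrm
  exact F.noPb hpth (hA hx0) (fun h2 => hbA (h2 ▸ hx0)) hrm

lemma Digraph'.IsLowestSA.unique {G : Digraph' α} {ρ u v x0 : α} {A : Finset α}
    (hx0 : x0 ∈ A) (hreach : G.Reaches ρ x0)
    (h1 : G.IsLowestSA ρ A u) (h2 : G.IsLowestSA ρ A v) : u = v := by
  by_contra hne
  obtain ⟨pth, hpth⟩ := hreach
  have hu := h1.1 x0 hx0 pth hpth
  have hv := h2.1 x0 hx0 pth hpth
  rcases reaches_or_of_mem hpth hu hv with hr | hr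
  · exact h1.2 v h2.1 (fun hh => hne hh.symm) hr
  · exact h2.2 u h1.1 hne hr

lemma CutFacts.lsa_transfer (F : CutFacts N N' a b pa pb p q) (hA : A ⊆ N.X) (hbA : b ∉ A)
    {x0 r : α} (hx0 : x0 ∈ A) (hl : N.G.IsLowestSA N.root A r) :
    N'.G.IsLowestSA N.root A r := by
  have hrpa := F.r_ne_pa hA hbA hl
  constructor
  · exact F.SA12 hA hbA hl.1 hrpa
  · intro v hSA' hvr
    have hvpa : v ≠ pa := fun hh => F.SAnotpa hA hx0 (hh ▸ hSA')
    have hSA : N.G.StableAncestor N.root A v := F.SA21 hA hbA hSA'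
    intro hre
    exact hl.2 v hSA hvr (F.reaches21 hre)

end SecD3
section SecD4
open List Multiset Relation Digraph'

variable {α : Type*} [DecidableEq α] {N N' : PhyloNet α} {a b pa pb p q : α} {A : Finset α}

lemma mem_pathGraph_V {G : Digraph' α} {r : α} {A : Finset α} {v : α} :
    v ∈ (G.pathGraph r A).V ↔ v ∈ G.V ∧ ∃ x ∈ A, ∃ pth, G.PathFrom r x pth ∧ v ∈ pth :=
  Finset.mem_filter

lemma mem_pathGraph_E {G : Digraph' α} {r : α} {A : Finset α} {e : α × α} :
    e ∈ (G.pathGraph r A).E ↔ e ∈ G.E ∧ ∃ x ∈ A, ∃ pth, G.PathFrom r x pth ∧ e ∈ pairs pth :=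
  Multiset.mem_filter

lemma pathGraph_count_le {G : Digraph' α} (hG : ∀ e : α × α, G.E.count e ≤ 1)
    (r : α) (A : Finset α) (e : α × α) : (G.pathGraph r A).E.count e ≤ 1 :=
  le_trans (Multiset.count_le_of_le _ (Multiset.filter_le _ _)) (hG e)

lemma multiset_eq_of_mem_iff {β : Type*} [DecidableEq β] {s t : Multiset β}
    (hs : ∀ x, s.count x ≤ 1) (ht : ∀ x, t.count x ≤ 1) (h : ∀ x, x ∈ s ↔ x ∈ t) : s = t := by
  ext x
  have h1 := hs x
  have h2 := ht x
  by_cases hm : x ∈ s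
  · have h3 := Multiset.one_le_count_iff_mem.mpr hm
    have h4 := Multiset.one_le_count_iff_mem.mpr ((h x).mp hm)
    omega
  · have hm2 : x ∉ t := fun hh => hm ((h x).mpr hh)
    rw [Multiset.count_eq_zero.mpr hm, Multiset.count_eq_zero.mpr hm2]

lemma pathGraph_good {G : Digraph' α} (hG : G.Good) (r : α) (A : Finset α) :
    (G.pathGraph r A).Good := by
  constructor
  · intro e he
    obtain ⟨heE, x, hx, pth, hpth, hep⟩ := mem_pathGraph_E.mp he
    have hm := mem_of_mem_pairs hep
    exact ⟨mem_pathGraph_V.mpr ⟨(hG.1 e heE).1, x, hx, pth, hpth, hm.1⟩,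
      mem_pathGraph_V.mpr ⟨(hG.1 e heE).2, x, hx, pth, hpth, hm.2⟩⟩
  · intro e he hre
    refine hG.2 e (mem_pathGraph_E.mp he).1 ?_
    exact reaches_mono (fun v hv => (mem_pathGraph_V.mp hv).1)
      (fun f hf => (mem_pathGraph_E.mp hf).1) hre

lemma no_step_of_E_zero {G : Digraph' α} (hE : G.E = 0) (K : Digraph' α) :
    ¬ Digraph'.SimpStep G K := by
  rintro (⟨w, hin, _⟩ | ⟨e, hcnt, _⟩)
  · rw [Digraph'.inDeg, hE] at hin; simp at hin
  · rw [hE] at hcnt; simp at hcnt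

lemma rtg_of_normal {G H : Digraph' α} (h : Relation.ReflTransGen Digraph'.SimpStep G H)
    (hn : ∀ K, ¬ Digraph'.SimpStep G K) : G = H := by
  rcases h.cases_head with hh | ⟨c, hs, _⟩
  · exact hh
  · exact absurd hs (hn c)

lemma pathGraph_empty (G : Digraph' α) (r : α) :
    G.pathGraph r (∅ : Finset α) = ⟨∅, 0⟩ := by
  unfold Digraph'.pathGraph
  congr 1
  · apply Finset.filter_false_of_mem
    rintro v hv ⟨x, hx, _⟩
    exact absurd hx (Finset.notMem_empty x)
  · rw [Multiset.filter_eq_nil]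
    rintro e he ⟨x, hx, _⟩
    exact absurd hx (Finset.notMem_empty x)

lemma pathGraph_of_root_leaf {G : Digraph' α} {r : α} (hr : G.outDeg r = 0) (hrV : r ∈ G.V)
    {A : Finset α} (hrA : r ∈ A) : G.pathGraph r A = ⟨{r}, 0⟩ := by
  unfold Digraph'.pathGraph
  congr 1
  · ext v
    simp only [Finset.mem_filter, Finset.mem_singleton]
    constructor
    · rintro ⟨hv, x, hx, pth, hpth, hvp⟩
      obtain ⟨h1, h2⟩ := eq_single_of_no_out hpth hr
      rw [h1] at hvp
      simpa using hvp
    · rintro rfl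
      exact ⟨hrV, v, hrA, [v], pathFrom_single hrV, by simp⟩
  · rw [Multiset.filter_eq_nil]
    rintro e he ⟨x, hx, pth, hpth, hep⟩
    obtain ⟨h1, _⟩ := eq_single_of_no_out hpth hr
    rw [h1] at hep
    simp [pairs] at hep

lemma CutFacts.pg_eq (F : CutFacts N N' a b pa pb p q) (hA : A ⊆ N.X) (hbA : b ∉ A)
    (haA : a ∉ A) {r : α} (hr1 : r ≠ pa) (hr2 : r ≠ pb) :
    N.G.pathGraph r A = N'.G.pathGraph r A := by
  apply Digraph'.ext'_s15
  · ext v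
    rw [mem_pathGraph_V, mem_pathGraph_V]
    constructor
    · rintro ⟨hvV, x, hx, pth, hpth, hvp⟩
      have hxX := hA hx
      have hxb : x ≠ b := fun hh => hbA (hh ▸ hx)
      have hpanp : pa ∉ pth := fun hm => haA (F.paMem hpth hxX hxb hm ▸ hx)
      obtain ⟨pth', hp', hviff, _⟩ := F.transfer1 hpth hxX hxb hr1 hr2
      exact ⟨(F.memV' v).mpr ⟨fun hh => hpanp (hh ▸ hvp),
        fun hh => (F.noPb hpth hxX hxb) (hh ▸ hvp), hvV⟩,
        x, hx, pth', hp', (hviff v).mpr ⟨hvp, fun hh => hpanp (hh ▸ hvp)⟩⟩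
    · rintro ⟨hvV, x, hx, pth', hp', hvp⟩
      have hxX := hA hx
      have hxb : x ≠ b := fun hh => hbA (hh ▸ hx)
      obtain ⟨pth, hp, hviff, _⟩ := F.transfer2 hp' hxX hxb
      exact ⟨((F.memV' v).mp hvV).2.2, x, hx, pth, hp, (hviff v).mpr (Or.inl hvp)⟩
  · refine multiset_eq_of_mem_iff (pathGraph_count_le (fun e => noPar e) r A)
      (pathGraph_count_le (fun e => noPar e) r A) ?_
    intro e
    rw [mem_pathGraph_E, mem_pathGraph_E]
    constructor
    · rintro ⟨heE, x, hx, pth, hpth, hep⟩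
      have hxX := hA hx
      have hxb : x ≠ b := fun hh => hbA (hh ▸ hx)
      have hpanp : pa ∉ pth := fun hm => haA (F.paMem hpth hxX hxb hm ▸ hx)
      have hpbnp : pb ∉ pth := F.noPb hpth hxX hxb
      have hm := mem_of_mem_pairs hep
      obtain ⟨pth', hp', _, heiff⟩ := F.transfer1 hpth hxX hxb hr1 hr2
      refine ⟨(F.memE' e).mpr (Or.inl ⟨heE, fun hh => hpanp (hh ▸ hm.1),
        fun hh => hpanp (hh ▸ hm.2), fun hh => hpbnp (hh ▸ hm.1),
        fun hh => hpbnp (hh ▸ hm.2)⟩), x, hx, pth', hp', ?_⟩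
      exact (heiff e).mpr (Or.inl ⟨hep, fun hh => hpanp (hh ▸ hm.1),
        fun hh => hpanp (hh ▸ hm.2)⟩)
    · rintro ⟨heE', x, hx, pth', hp', hep'⟩
      have hxX := hA hx
      have hxb : x ≠ b := fun hh => hbA (hh ▸ hx)
      have hm' := mem_of_mem_pairs hep'
      have hepa : e ≠ (p, a) := by
        intro hh
        have ha2 : a ∈ pth' := by rw [hh] at hm'; exact hm'.2
        exact haA (F.aEnd' hp' ha2 ▸ hx)
      obtain ⟨pth, hp, _, heiff⟩ := F.transfer2 hp' hxX hxb
      have hein : e ∈ pairs pth := (heiff e).mpr (Or.inl ⟨hep', hepa⟩)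
      have heE : e ∈ N.G.E := by
        rcases (F.memE' e).mp heE' with hh | hh | hh
        · exact hh.1
        · exact absurd hh hepa
        · exfalso
          refine F.noB' hp' hxb ?_
          rw [hh] at hm'
          exact hm'.2
      exact ⟨heE, x, hx, pth, hp, hein⟩

lemma CutFacts.pg_suppress (F : CutFacts N N' a b pa pb p q) (hA : A ⊆ N.X) (hbA : b ∉ A)
    (haA : a ∈ A) {r : α} (hSA : N.G.StableAncestor N.root A r)
    (hr1 : r ≠ pa) (hr2 : r ≠ pb) (hra : r ≠ a) :
    (N.G.pathGraph r A).Suppress pa (N'.G.pathGraph r A) := by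
  have hab : (a : α) ≠ b := F.hab
  have haV : a ∈ N.G.V := (F.leafX a F.haX).1
  obtain ⟨pth0, hpth0⟩ := N.reach a haV
  have hrm : r ∈ pth0 := hSA a haA pth0 hpth0
  obtain ⟨pth1, hp1, _⟩ := hpth0.suffix_of_mem hrm
  rcases hp1.concat_cases with ⟨_, hcontra⟩ | ⟨q0, y, hpatheq, hq0, hyarc⟩
  · exact absurd hcontra hra
  obtain rfl : pa = y := (F.in_a y hyarc).symm
  rcases hq0.concat_cases with ⟨_, hcontra⟩ | ⟨q1, y2, hq0eq, hq1, hy2arc⟩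
  · exact absurd hcontra hr1
  obtain rfl : p = y2 := (F.in_pa y2 hy2arc).symm
  subst hpatheq
  have hq0eq' : q0 = q1 ++ [p] := by
    have h2 : q0 ++ [pa] = (q1 ++ [p]) ++ [pa] := by rw [hq0eq]; simp
    have h3 := congrArg List.dropLast h2
    rwa [List.dropLast_concat, List.dropLast_concat] at h3
  have hppaP : (p, pa) ∈ pairs (q0 ++ [pa, a]) ∧ (pa, a) ∈ pairs (q0 ++ [pa, a]) := by
    rw [pairs_concat_concat, hq0eq',
      show (q1 ++ [p]) ++ [pa] = q1 ++ [p, pa] from by simp, pairs_concat_concat]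
    constructor <;> simp
  have hppaPG : (p, pa) ∈ (N.G.pathGraph r A).E :=
    mem_pathGraph_E.mpr ⟨F.hppa, a, haA, _, hp1, hppaP.1⟩
  have hpaaPG : (pa, a) ∈ (N.G.pathGraph r A).E :=
    mem_pathGraph_E.mpr ⟨F.hpaa, a, haA, _, hp1, hppaP.2⟩
  have hinPG : (N.G.pathGraph r A).inDeg pa = 1 := by
    have hfil : (N.G.pathGraph r A).E.filter (fun e => e.2 = pa) = {(p, pa)} := by
      apply eq_singleton_of
      · rintro ⟨e1, e2⟩ hfm
        obtain ⟨hfE, hfp⟩ := Multiset.mem_filter.mp hfm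
        have h3 := (mem_pathGraph_E.mp hfE).1
        have h4 : e1 = p := F.in_pa e1 (by rwa [show e2 = pa from hfp] at h3)
        rw [h4, show e2 = pa from hfp]
      · exact Multiset.mem_filter.mpr ⟨hppaPG, rfl⟩
      · exact le_trans (Multiset.count_le_of_le _ (Multiset.filter_le _ _))
          (pathGraph_count_le (fun e => noPar e) r A _)
    rw [Digraph'.inDeg, hfil]
    simp
  have houtPG : (N.G.pathGraph r A).outDeg pa = 1 := by
    have hfil : (N.G.pathGraph r A).E.filter (fun e => e.1 = pa) = {(pa, a)} := by
      apply eq_singleton_of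
      · rintro ⟨e1, e2⟩ hfm
        obtain ⟨hfE, hfp⟩ := Multiset.mem_filter.mp hfm
        obtain ⟨h3, x2, hx2, pth2, hpth2, hep2⟩ := mem_pathGraph_E.mp hfE
        rcases F.out_pa e2 (by rwa [show e1 = pa from hfp] at h3) with hh | hh
        · rw [show e1 = pa from hfp, hh]
        · exfalso
          refine F.noPb hpth2 (hA hx2) (fun h5 => hbA (h5 ▸ hx2)) ?_
          have := (mem_of_mem_pairs hep2).2
          rwa [hh] at this
      · exact Multiset.mem_filter.mpr ⟨hpaaPG, rfl⟩
      · exact le_trans (Multiset.count_le_of_le _ (Multiset.filter_le _ _))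
          (pathGraph_count_le (fun e => noPar e) r A _)
    rw [Digraph'.outDeg, hfil]
    simp
  refine suppress_of hinPG houtPG hppaPG hpaaPG ?_ ?_
  · -- vertex sets
    ext v
    rw [Finset.mem_erase, mem_pathGraph_V, mem_pathGraph_V]
    constructor
    · rintro ⟨hvV', x, hx, pth', hp', hvp⟩
      have hxX := hA hx
      have hxb : x ≠ b := fun hh => hbA (hh ▸ hx)
      obtain ⟨pth, hp, hviff, _⟩ := F.transfer2 hp' hxX hxb
      exact ⟨((F.memV' v).mp hvV').1, ((F.memV' v).mp hvV').2.2, x, hx, pth, hp,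
        (hviff v).mpr (Or.inl hvp)⟩
    · rintro ⟨hvne, hvV, x, hx, pth, hpth, hvp⟩
      have hxX := hA hx
      have hxb : x ≠ b := fun hh => hbA (hh ▸ hx)
      obtain ⟨pth', hp', hviff, _⟩ := F.transfer1 hpth hxX hxb hr1 hr2
      exact ⟨(F.memV' v).mpr ⟨hvne, fun hh => (F.noPb hpth hxX hxb) (hh ▸ hvp), hvV⟩,
        x, hx, pth', hp', (hviff v).mpr ⟨hvp, hvne⟩⟩
  · -- edge multisets
    have hpaPG : (p, a) ∉ (N.G.pathGraph r A).E := fun hh =>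
      F.hpaE (mem_pathGraph_E.mp hh).1
    refine multiset_eq_of_mem_iff (pathGraph_count_le (fun e => noPar e) r A) ?_ ?_
    · intro x
      rw [Multiset.count_add, Multiset.count_filter, Multiset.count_singleton]
      by_cases hx : x = (p, a)
      · subst hx
        rw [Multiset.count_eq_zero.mpr hpaPG]
        split_ifs <;> simp
      · rw [if_neg hx]
        have := pathGraph_count_le (fun e => noPar (N := N) e) r A x
        split_ifs <;> omega
    · intro e
      rw [mem_pathGraph_E, Multiset.mem_add, Multiset.mem_filter, mem_pathGraph_E,
        Multiset.mem_singleton]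
      constructor
      · rintro ⟨heE', x, hx, pth', hp', hep'⟩
        have hxX := hA hx
        have hxb : x ≠ b := fun hh => hbA (hh ▸ hx)
        have hm' := mem_of_mem_pairs hep'
        by_cases hepa : e = (p, a)
        · exact Or.inr hepa
        · obtain ⟨pth, hp, _, heiff⟩ := F.transfer2 hp' hxX hxb
          have hein : e ∈ pairs pth := (heiff e).mpr (Or.inl ⟨hep', hepa⟩)
          rcases (F.memE' e).mp heE' with ⟨hh, h1, h2, _, _⟩ | hh | hh
          · exact Or.inl ⟨⟨hh, x, hx, pth, hp, hein⟩, h1, h2⟩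
          · exact absurd hh hepa
          · exfalso
            refine F.noB' hp' hxb ?_
            rw [hh] at hm'
            exact hm'.2
      · rintro (⟨⟨heE, x, hx, pth, hpth, hep⟩, h1, h2⟩ | rfl)
        · have hxX := hA hx
          have hxb : x ≠ b := fun hh => hbA (hh ▸ hx)
          have hpbnp : pb ∉ pth := F.noPb hpth hxX hxb
          have hm := mem_of_mem_pairs hep
          obtain ⟨pth', hp', _, heiff⟩ := F.transfer1 hpth hxX hxb hr1 hr2
          refine ⟨(F.memE' e).mpr (Or.inl ⟨heE, h1, h2, fun hh => hpbnp (hh ▸ hm.1),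
            fun hh => hpbnp (hh ▸ hm.2)⟩), x, hx, pth', hp', ?_⟩
          exact (heiff e).mpr (Or.inl ⟨hep, h1, h2⟩)
        · obtain ⟨pth', hp', _, heiff⟩ := F.transfer1 hp1 F.haX hab hr1 hr2
          exact ⟨F.hpaE', a, haA, pth', hp', (heiff _).mpr (Or.inr ⟨rfl, hppaP.2⟩)⟩

end SecD4
/-- if `N'` is obtained from `N` by cutting a reticulated
cherry `(a, b)` and `b ∉ A`, then `N_A = N'_A`. -/
theorem exhibited_eq_of_cut_not_mem
    {α : Type*} [DecidableEq α] (N N' : PhyloNet α) (a b : α)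
    (h : N.CutRetCherry a b N')
    (A : Finset α) (hA : A ⊆ N.X) (hb : b ∉ A)
    (HA HA' : Digraph' α)
    (h1 : N.Exhibits A HA) (h2 : N'.Exhibits A HA') :
    HA = HA' := by
  obtain ⟨pa, pb, p, q, F⟩ := cutRetCherry_facts h
  obtain ⟨r, hlsa, hrtg, hnorm⟩ := h1
  obtain ⟨r', hlsa', hrtg', hnorm'⟩ := h2
  rw [F.hroot] at hlsa'
  by_cases hAe : A = ∅
  · subst hAe
    rw [pathGraph_empty] at hrtg hrtg'
    rw [← rtg_of_normal hrtg (no_step_of_E_zero rfl),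
      ← rtg_of_normal hrtg' (no_step_of_E_zero rfl)]
  · obtain ⟨x0, hx0⟩ := Finset.nonempty_iff_ne_empty.mpr hAe
    have hx0X := hA hx0
    have hx0V' : x0 ∈ N'.G.V := (F.leafX' x0 (by rw [F.hX']; exact hx0X)).1
    have hreach' : N'.G.Reaches N.root x0 := by
      rw [← F.hroot]; exact N'.reach x0 hx0V'
    have hlsa2 : N'.G.IsLowestSA N.root A r := F.lsa_transfer hA hb hx0 hlsa
    obtain rfl : r' = r := Digraph'.IsLowestSA.unique hx0 hreach' hlsa' hlsa2
    have hr1 : r' ≠ pa := F.r_ne_pa hA hb hlsa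
    have hr2 : r' ≠ pb := F.r_ne_pb hA hb hx0 hlsa
    by_cases haA : a ∈ A
    · by_cases hra : r' = a
      · have e1 : N.G.pathGraph r' A = ⟨{r'}, 0⟩ :=
          pathGraph_of_root_leaf (by rw [hra]; exact F.houta)
            (by rw [hra]; exact (F.leafX a F.haX).1) (by rw [hra]; exact haA)
        have e2 : N'.G.pathGraph r' A = ⟨{r'}, 0⟩ :=
          pathGraph_of_root_leaf (by rw [hra]; exact F.houta')
            (by rw [hra]; exact (F.leafX' a F.haX').1) (by rw [hra]; exact haA)
        rw [e1] at hrtg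
        rw [e2] at hrtg'
        rw [← rtg_of_normal hrtg (no_step_of_E_zero rfl),
          ← rtg_of_normal hrtg' (no_step_of_E_zero rfl)]
      · have hsup := F.pg_suppress hA hb haA hlsa.1 hr1 hr2 hra
        exact Digraph'.normal_unique (pathGraph_good (goodN N) r' A) hrtg hnorm
          (Relation.ReflTransGen.head (Or.inl ⟨pa, hsup⟩) hrtg') hnorm'
    · have hpg := F.pg_eq hA hb haA hr1 hr2
      rw [← hpg] at hrtg'
      exact Digraph'.normal_unique (pathGraph_good (goodN N) r' A) hrtg hnorm hrtg' hnorm'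
end
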